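/- arXiv:1304.1837 — 7 statements merged into one kernel-verified Lean document; each statement's English description precedes it below -/
import Mathlib

section
/- Let X_S, X_B, X_T be full-rank d-column matrices with V_S = X_S^T X_S, V_B = X_B^T X_B, V_T = X_T^T X_T. For λ ≥ 0, the minimizers (β̂, γ̂) of ‖Y_S − X_S β‖² + ‖Y_B − X_B(β+γ)‖² + λ‖X_T γ‖² satisfy β̂ = W_λ β̂_S + (I − W_λ) β̂_B, where β̂_S = V_S⁻¹X_S^T Y_S, β̂_B = V_B⁻¹X_B^T Y_B, and W_λ = (V_S + λ V_T V_B⁻¹ V_S + λ V_T)⁻¹ (V_S + λ V_T V_B⁻¹ V_S). -/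
open Matrix BigOperators

lemma aux_ker {m d : ℕ} (X : Matrix (Fin m) (Fin d) ℝ) (hX : X.rank = d) :
    ∀ v : Fin d → ℝ, X.mulVec v = 0 → v = 0 := by
  rw [← Matrix.ker_mulVecLin_eq_bot_iff]
  have h := LinearMap.finrank_range_add_finrank_ker X.mulVecLin
  rw [show Module.finrank ℝ (Fin d → ℝ) = d by simp] at h
  have hk : Module.finrank ℝ (LinearMap.ker X.mulVecLin) = 0 := by
    have : X.rank = Module.finrank ℝ (LinearMap.range X.mulVecLin) := rfl
    omega
  exact Submodule.finrank_eq_zero.mp hk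

lemma aux_posdef {m d : ℕ} (X : Matrix (Fin m) (Fin d) ℝ) (hX : X.rank = d) :
    (Xᵀ * X).PosDef := by
  rw [Matrix.posDef_iff_dotProduct_mulVec]
  constructor
  · have := Matrix.isHermitian_conjTranspose_mul_self X
    simpa using this
  · intro x hx
    have h1 : star x ⬝ᵥ (Xᵀ * X) *ᵥ x = (X *ᵥ x) ⬝ᵥ (X *ᵥ x) := by
      rw [← Matrix.mulVec_mulVec, Matrix.dotProduct_mulVec, Matrix.vecMul_transpose]
      simp
    rw [h1]
    have hXx : X *ᵥ x ≠ 0 := fun h => hx (aux_ker X hX x h)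
    have hnn : 0 ≤ (X *ᵥ x) ⬝ᵥ (X *ᵥ x) := Finset.sum_nonneg fun i _ => mul_self_nonneg _
    rcases hnn.lt_or_eq with h | h
    · exact h
    · exact absurd (dotProduct_self_eq_zero.mp h.symm) hXx

lemma aux_quad (l q : ℝ) (hq : 0 ≤ q) (h : ∀ t : ℝ, 0 ≤ t * l + t^2 * q) : l = 0 := by
  by_contra hl
  have h1 := h (-l / (q + 1))
  have hq1 : 0 < q + 1 := by linarith
  have h2 : (-l / (q + 1)) * l + (-l / (q + 1))^2 * q = -(l^2) * (1 / (q+1)^2) := by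
    field_simp; ring
  rw [h2] at h1
  have h3 : 0 < l^2 := by positivity
  have h4 : 0 < (q+1)^2 := by positivity
  have h5 : 0 < 1/(q+1)^2 := by positivity
  nlinarith [mul_pos h3 h5]

lemma aux_quad' (s q : ℝ) (hq : 0 ≤ q) (h : ∀ t : ℝ, 0 ≤ -2*t*s + t^2*q) : s = 0 := by
  have h0 : (-2*s) = 0 := aux_quad (-2*s) q hq (fun t => by have := h t; linarith)
  linarith

lemma aux_expand {m : ℕ} (t : ℝ) (Y A B : Fin m → ℝ) :
    ∑ i, (Y i - (A i + t * B i))^2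
      = ∑ i, (Y i - A i)^2 - 2*t*(∑ i, (Y i - A i) * B i) + t^2 * ∑ i, (B i)^2 := by
  simp only [Finset.mul_sum, ← Finset.sum_add_distrib, ← Finset.sum_sub_distrib]
  apply Finset.sum_congr rfl; intros; ring

lemma aux_expand2 {m : ℕ} (t : ℝ) (A B : Fin m → ℝ) :
    ∑ i, (A i + t * B i)^2
      = ∑ i, (A i)^2 + 2*t*(∑ i, A i * B i) + t^2 * ∑ i, (B i)^2 := by
  simp only [Finset.mul_sum, ← Finset.sum_add_distrib]
  apply Finset.sum_congr rfl; intros; ring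

/-- For full-rank design matrices `X_S, X_B, X_T` and `λ ≥ 0`, the minimizers
`(β̂, γ̂)` of `‖Y_S − X_S β‖² + ‖Y_B − X_B(β+γ)‖² + λ‖X_T γ‖²` satisfy
`β̂ = W_λ β̂_S + (I − W_λ) β̂_B` where `β̂_S = V_S⁻¹ X_Sᵀ Y_S`,
`β̂_B = V_B⁻¹ X_Bᵀ Y_B` and
`W_λ = (V_S + λ V_T V_B⁻¹ V_S + λ V_T)⁻¹ (V_S + λ V_T V_B⁻¹ V_S)`. -/
theorem stmt0 {n N r d : ℕ}
    (XS : Matrix (Fin n) (Fin d) ℝ) (XB : Matrix (Fin N) (Fin d) ℝ)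
    (XT : Matrix (Fin r) (Fin d) ℝ)
    (hXS : XS.rank = d) (hXB : XB.rank = d) (hXT : XT.rank = d)
    (YS : Fin n → ℝ) (YB : Fin N → ℝ) (lam : ℝ) (hlam : 0 ≤ lam)
    (bhat ghat : Fin d → ℝ)
    (hmin : ∀ b g : Fin d → ℝ,
      (∑ i, (YS i - XS.mulVec bhat i)^2)
        + (∑ i, (YB i - XB.mulVec (bhat + ghat) i)^2)
        + lam * (∑ i, (XT.mulVec ghat i)^2)
      ≤ (∑ i, (YS i - XS.mulVec b i)^2)
        + (∑ i, (YB i - XB.mulVec (b + g) i)^2)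
        + lam * (∑ i, (XT.mulVec g i)^2)) :
    bhat =
      (((XSᵀ * XS) + lam • ((XTᵀ * XT) * (XBᵀ * XB)⁻¹ * (XSᵀ * XS))
          + lam • (XTᵀ * XT))⁻¹
        * ((XSᵀ * XS) + lam • ((XTᵀ * XT) * (XBᵀ * XB)⁻¹ * (XSᵀ * XS)))).mulVec
        ((XSᵀ * XS)⁻¹.mulVec (XSᵀ.mulVec YS))
      + ((1 : Matrix (Fin d) (Fin d) ℝ)
          - ((XSᵀ * XS) + lam • ((XTᵀ * XT) * (XBᵀ * XB)⁻¹ * (XSᵀ * XS))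
              + lam • (XTᵀ * XT))⁻¹
            * ((XSᵀ * XS) + lam • ((XTᵀ * XT) * (XBᵀ * XB)⁻¹ * (XSᵀ * XS)))).mulVec
        ((XBᵀ * XB)⁻¹.mulVec (XBᵀ.mulVec YB)) := by
  have hPS := aux_posdef XS hXS
  have hPB := aux_posdef XB hXB
  have hPT := aux_posdef XT hXT
  set VS := XSᵀ * XS with hVSdef
  set VB := XBᵀ * XB with hVBdef
  set VT := XTᵀ * XT with hVTdef
  set u := XSᵀ *ᵥ YS with hudef
  set w := XBᵀ *ᵥ YB with hwdef
  have hdetS : IsUnit VS.det := (Matrix.isUnit_iff_isUnit_det VS).mp hPS.isUnit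
  have hdetB : IsUnit VB.det := (Matrix.isUnit_iff_isUnit_det VB).mp hPB.isUnit
  -- First order condition in the `b` direction
  have key1 : XSᵀ *ᵥ (YS - XS *ᵥ bhat) + XBᵀ *ᵥ (YB - XB *ᵥ (bhat + ghat)) = 0 := by
    set p := XSᵀ *ᵥ (YS - XS *ᵥ bhat) + XBᵀ *ᵥ (YB - XB *ᵥ (bhat + ghat)) with hp
    have hdot : ∀ v : Fin d → ℝ, p ⬝ᵥ v =
        (∑ i, (YS i - XS.mulVec bhat i) * XS.mulVec v i)
          + (∑ i, (YB i - XB.mulVec (bhat + ghat) i) * XB.mulVec v i) := by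
      intro v
      rw [hp, add_dotProduct, Matrix.mulVec_transpose, Matrix.mulVec_transpose,
        ← Matrix.dotProduct_mulVec, ← Matrix.dotProduct_mulVec]
      simp [dotProduct]
    have hzero : ∀ v : Fin d → ℝ, p ⬝ᵥ v = 0 := by
      intro v
      rw [hdot v]
      apply aux_quad' _ ((∑ i, (XS.mulVec v i)^2) + (∑ i, (XB.mulVec v i)^2))
      · positivity
      · intro t
        have h := hmin (bhat + t • v) ghat
        have e1 : ∑ i, (YS i - XS.mulVec (bhat + t • v) i)^2
            = ∑ i, (YS i - XS.mulVec bhat i)^2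
              - 2*t*(∑ i, (YS i - XS.mulVec bhat i) * XS.mulVec v i)
              + t^2 * ∑ i, (XS.mulVec v i)^2 := by
          have hpt : ∀ i, XS.mulVec (bhat + t • v) i
              = XS.mulVec bhat i + t * XS.mulVec v i := by
            intro i; simp [Matrix.mulVec_add, Matrix.mulVec_smul]
          simp only [hpt]
          exact aux_expand t _ _ _
        have e2 : ∑ i, (YB i - XB.mulVec (bhat + t • v + ghat) i)^2
            = ∑ i, (YB i - XB.mulVec (bhat + ghat) i)^2
              - 2*t*(∑ i, (YB i - XB.mulVec (bhat + ghat) i) * XB.mulVec v i)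
              + t^2 * ∑ i, (XB.mulVec v i)^2 := by
          have hpt : ∀ i, XB.mulVec (bhat + t • v + ghat) i
              = XB.mulVec (bhat + ghat) i + t * XB.mulVec v i := by
            intro i; simp [Matrix.mulVec_add, Matrix.mulVec_smul]; ring
          simp only [hpt]
          exact aux_expand t _ _ _
        rw [e1, e2] at h
        linarith
    have := hzero p
    exact dotProduct_self_eq_zero.mp this
  -- First order condition in the `g` direction
  have key2 : XBᵀ *ᵥ (YB - XB *ᵥ (bhat + ghat)) - lam • (VT *ᵥ ghat) = 0 := by
    set p := XBᵀ *ᵥ (YB - XB *ᵥ (bhat + ghat)) - lam • (VT *ᵥ ghat) with hp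
    have hdot : ∀ v : Fin d → ℝ, p ⬝ᵥ v =
        (∑ i, (YB i - XB.mulVec (bhat + ghat) i) * XB.mulVec v i)
          - lam * (∑ i, XT.mulVec ghat i * XT.mulVec v i) := by
      intro v
      rw [hp, sub_dotProduct, smul_dotProduct, hVTdef, ← Matrix.mulVec_mulVec,
        Matrix.mulVec_transpose, Matrix.mulVec_transpose,
        ← Matrix.dotProduct_mulVec, ← Matrix.dotProduct_mulVec]
      simp [dotProduct]
    have hzero : ∀ v : Fin d → ℝ, p ⬝ᵥ v = 0 := by
      intro v
      rw [hdot v]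
      apply aux_quad' _ ((∑ i, (XB.mulVec v i)^2) + lam * (∑ i, (XT.mulVec v i)^2))
      · have h1 : (0:ℝ) ≤ ∑ i, (XB.mulVec v i)^2 := by positivity
        have h2 : (0:ℝ) ≤ ∑ i, (XT.mulVec v i)^2 := by positivity
        nlinarith
      · intro t
        have h := hmin bhat (ghat + t • v)
        have e2 : ∑ i, (YB i - XB.mulVec (bhat + (ghat + t • v)) i)^2
            = ∑ i, (YB i - XB.mulVec (bhat + ghat) i)^2
              - 2*t*(∑ i, (YB i - XB.mulVec (bhat + ghat) i) * XB.mulVec v i)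
              + t^2 * ∑ i, (XB.mulVec v i)^2 := by
          have hpt : ∀ i, XB.mulVec (bhat + (ghat + t • v)) i
              = XB.mulVec (bhat + ghat) i + t * XB.mulVec v i := by
            intro i; simp [Matrix.mulVec_add, Matrix.mulVec_smul]; ring
          simp only [hpt]
          exact aux_expand t _ _ _
        have e3 : ∑ i, (XT.mulVec (ghat + t • v) i)^2
            = ∑ i, (XT.mulVec ghat i)^2
              + 2*t*(∑ i, XT.mulVec ghat i * XT.mulVec v i)
              + t^2 * ∑ i, (XT.mulVec v i)^2 := by
          have hpt : ∀ i, XT.mulVec (ghat + t • v) i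
              = XT.mulVec ghat i + t * XT.mulVec v i := by
            intro i; simp [Matrix.mulVec_add, Matrix.mulVec_smul]
          simp only [hpt]
          exact aux_expand2 t _ _
        rw [e2, e3] at h
        nlinarith [h]
    have := hzero p
    exact dotProduct_self_eq_zero.mp this
  -- rewrite the first order conditions
  simp only [Matrix.mulVec_sub, Matrix.mulVec_add, Matrix.mulVec_mulVec] at key1 key2
  simp only [← hVSdef, ← hVBdef, ← hudef, ← hwdef] at key1 key2
  have hA : VS *ᵥ bhat = u + lam • (VT *ᵥ ghat) := by
    linear_combination (norm := module) key2 - key1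
  have hBv : VB *ᵥ bhat + VB *ᵥ ghat + lam • (VT *ᵥ ghat) = w := by
    linear_combination (norm := module) - key2
  -- the matrix M is invertible
  have hMunit : IsUnit (VS + lam • (VT * VB⁻¹ * VS) + lam • VT) := by
    rw [← Matrix.mulVec_injective_iff_isUnit]
    have hker : ∀ x : Fin d → ℝ,
        (VS + lam • (VT * VB⁻¹ * VS) + lam • VT) *ᵥ x = 0 → x = 0 := by
      intro x hx
      by_contra hx0
      set y := VB⁻¹ *ᵥ (VS *ᵥ x) + x with hy
      have hs : VS *ᵥ x = -(lam • (VT *ᵥ y)) := by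
        simp only [Matrix.add_mulVec, Matrix.smul_mulVec,
          ← Matrix.mulVec_mulVec] at hx
        simp only [hy, Matrix.mulVec_add]
        linear_combination (norm := module) hx
      have h1 : y ⬝ᵥ (VS *ᵥ x) = -(lam * (y ⬝ᵥ (VT *ᵥ y))) := by
        rw [hs, dotProduct_neg, dotProduct_smul, smul_eq_mul]
      have h2 : 0 ≤ y ⬝ᵥ (VT *ᵥ y) := by
        have := hPT.posSemidef.dotProduct_mulVec_nonneg y
        simpa using this
      have h3 : 0 ≤ (VB⁻¹ *ᵥ (VS *ᵥ x)) ⬝ᵥ (VS *ᵥ x) := by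
        have := hPB.inv.posSemidef.dotProduct_mulVec_nonneg (VS *ᵥ x)
        simpa [dotProduct_comm] using this
      have h4 : 0 < x ⬝ᵥ (VS *ᵥ x) := by
        have := hPS.dotProduct_mulVec_pos hx0
        simpa using this
      have h5 : y ⬝ᵥ (VS *ᵥ x) = (VB⁻¹ *ᵥ (VS *ᵥ x)) ⬝ᵥ (VS *ᵥ x) + x ⬝ᵥ (VS *ᵥ x) := by
        rw [hy, add_dotProduct]
      nlinarith [mul_nonneg hlam h2]
    intro a b hab
    have : a - b = 0 := hker (a - b) (by rw [Matrix.mulVec_sub, hab, sub_self])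
    exact sub_eq_zero.mp this
  have hMdet : IsUnit (VS + lam • (VT * VB⁻¹ * VS) + lam • VT).det :=
    (Matrix.isUnit_iff_isUnit_det _).mp hMunit
  set M := VS + lam • (VT * VB⁻¹ * VS) + lam • VT with hMdef
  set A := VS + lam • (VT * VB⁻¹ * VS) with hAdef
  set βS := VS⁻¹ *ᵥ u with hβS
  set βB := VB⁻¹ *ᵥ w with hβB
  have hu : VS *ᵥ βS = u := by
    rw [hβS, Matrix.mulVec_mulVec, Matrix.mul_nonsing_inv _ hdetS, Matrix.one_mulVec]
  have hw' : βB = bhat + ghat + lam • (VB⁻¹ *ᵥ (VT *ᵥ ghat)) := by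
    rw [hβB, ← hBv]
    simp only [Matrix.mulVec_add, Matrix.mulVec_smul, Matrix.mulVec_mulVec,
      Matrix.nonsing_inv_mul _ hdetB, Matrix.one_mulVec]
  have hmain : M *ᵥ bhat = A *ᵥ βS + lam • (VT *ᵥ βB) := by
    rw [hw', hMdef, hAdef]
    simp only [Matrix.add_mulVec, Matrix.smul_mulVec, ← Matrix.mulVec_mulVec,
      Matrix.mulVec_add, Matrix.mulVec_smul, hA, hu]
    module
  have hMinvM : ∀ y : Fin d → ℝ, M⁻¹ *ᵥ (M *ᵥ y) = y := fun y => by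
    rw [Matrix.mulVec_mulVec, Matrix.nonsing_inv_mul _ hMdet, Matrix.one_mulVec]
  have hβBdec : βB = M⁻¹ *ᵥ (A *ᵥ βB) + lam • (M⁻¹ *ᵥ (VT *ᵥ βB)) := by
    conv_lhs => rw [← hMinvM βB]
    rw [show M = A + lam • VT from by rw [hMdef, hAdef]]
    rw [Matrix.add_mulVec, Matrix.smul_mulVec, Matrix.mulVec_add, Matrix.mulVec_smul]
  calc bhat = M⁻¹ *ᵥ (M *ᵥ bhat) := (hMinvM bhat).symm
    _ = M⁻¹ *ᵥ (A *ᵥ βS + lam • (VT *ᵥ βB)) := by rw [hmain]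
    _ = M⁻¹ *ᵥ (A *ᵥ βS) + lam • (M⁻¹ *ᵥ (VT *ᵥ βB)) := by
        rw [Matrix.mulVec_add, Matrix.mulVec_smul]
    _ = (M⁻¹ * A) *ᵥ βS + ((1 : Matrix (Fin d) (Fin d) ℝ) - M⁻¹ * A) *ᵥ βB := by
        rw [Matrix.sub_mulVec, Matrix.one_mulVec, ← Matrix.mulVec_mulVec βS M⁻¹ A,
          ← Matrix.mulVec_mulVec βB M⁻¹ A]
        linear_combination (norm := module) -hβBdec
end

section
/- If V_T = V_S, both positive definite, and M = V_S^{1/2} V_B⁻¹ V_S^{1/2} has eigenvalues ν₁,…,ν_d, then tr(W_λ) = Σ_{j=1}^d (1 + λν_j)/(1 + λ + λν_j), where W_λ = (V_B + λV_S + λV_B)⁻¹(V_B + λV_S). -/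
open Matrix BigOperators

/-- Positive-definiteness is preserved under congruence by an invertible
real matrix. -/
lemma aux_posdef_conj {n : Type*} [Fintype n] [DecidableEq n]
    {A B : Matrix n n ℝ} (hA : A.PosDef) (hB : IsUnit B) :
    (Bᵀ * A * B).PosDef := by
  refine Matrix.PosDef.of_dotProduct_mulVec_pos ?_ ?_
  · have h := Matrix.isHermitian_conjTranspose_mul_mul B hA.1
    simpa [Matrix.conjTranspose_eq_transpose_of_trivial] using h
  · intro x hx
    have hBx : B *ᵥ x ≠ 0 := by
      have hinj : Function.Injective (B.mulVec) :=
        Matrix.mulVec_injective_iff_isUnit.mpr hB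
      intro h
      exact hx (hinj (by simpa using h))
    have h := hA.dotProduct_mulVec_pos hBx
    have hq : x ⬝ᵥ (Bᵀ * A * B) *ᵥ x = (B *ᵥ x) ⬝ᵥ A *ᵥ (B *ᵥ x) := by
      rw [← Matrix.mulVec_mulVec, ← Matrix.mulVec_mulVec, Matrix.dotProduct_mulVec,
        Matrix.vecMul_transpose, Matrix.dotProduct_mulVec]
    simpa [hq] using h

/-- If `V_T = V_S`, both positive definite, and `M = V_S^{1/2} V_B⁻¹ V_S^{1/2}`
has eigenvalues `ν_j` (via an orthogonal diagonalization `M = U diag(ν) Uᵀ`),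
then `tr(W_λ) = Σ_j (1 + λ ν_j)/(1 + λ + λ ν_j)`, where
`W_λ = (V_B + λ V_S + λ V_B)⁻¹ (V_B + λ V_S)`. -/
theorem stmt2 {d : ℕ} (VS VB : Matrix (Fin d) (Fin d) ℝ)
    (hVS : VS.PosDef) (hVB : VB.PosDef)
    (R : Matrix (Fin d) (Fin d) ℝ) (hRpd : R.PosDef) (hRsq : R * R = VS)
    (lam : ℝ) (hlam : 0 ≤ lam)
    (ν : Fin d → ℝ) (U : Matrix (Fin d) (Fin d) ℝ) (hU : Uᵀ * U = 1)
    (hM : R * VB⁻¹ * R = U * Matrix.diagonal ν * Uᵀ) :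
    ((VB + lam • VS + lam • VB)⁻¹ * (VB + lam • VS)).trace
      = ∑ j, (1 + lam * ν j) / (1 + lam + lam * ν j) := by
  -- basic invertibility facts
  have hRdet : IsUnit R.det := hRpd.det_pos.ne'.isUnit
  have hVBdet : IsUnit VB.det := hVB.det_pos.ne'.isUnit
  have hUU : U * Uᵀ = 1 := mul_eq_one_comm.mp hU
  have hRR : R * R⁻¹ = 1 := Matrix.mul_nonsing_inv _ hRdet
  have hRR' : R⁻¹ * R = 1 := Matrix.nonsing_inv_mul _ hRdet
  -- cancellation helpers
  have c1 : ∀ X : Matrix (Fin d) (Fin d) ℝ, R⁻¹ * (R * X) = X := fun X => by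
    rw [← Matrix.mul_assoc, hRR', Matrix.one_mul]
  have c2 : ∀ X : Matrix (Fin d) (Fin d) ℝ, R * (R⁻¹ * X) = X := fun X => by
    rw [← Matrix.mul_assoc, hRR, Matrix.one_mul]
  have c3 : ∀ X : Matrix (Fin d) (Fin d) ℝ, Uᵀ * (U * X) = X := fun X => by
    rw [← Matrix.mul_assoc, hU, Matrix.one_mul]
  have c4 : ∀ X : Matrix (Fin d) (Fin d) ℝ, U * (Uᵀ * X) = X := fun X => by
    rw [← Matrix.mul_assoc, hUU, Matrix.one_mul]
  -- positivity of eigenvalues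
  have hMpd : (R * VB⁻¹ * R).PosDef := by
    have h := aux_posdef_conj hVB.inv hRpd.isUnit
    have hRT : Rᵀ = R := by
      have h2 := hRpd.1
      rw [← Matrix.conjTranspose_eq_transpose_of_trivial]
      exact h2
    rwa [hRT] at h
  have hν : ∀ j, 0 < ν j := by
    have hD : Matrix.diagonal ν = Uᵀ * (R * VB⁻¹ * R) * U := by
      rw [hM]
      simp only [Matrix.mul_assoc, hU, Matrix.mul_one, c3]
    have hDpd : (Matrix.diagonal ν).PosDef := by
      rw [hD]
      exact aux_posdef_conj hMpd
        ((Matrix.isUnit_iff_isUnit_det U).mpr (Matrix.isUnit_det_of_left_inverse hU))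
    exact Matrix.posDef_diagonal_iff.mp hDpd
  have hνne : ∀ j, ν j ≠ 0 := fun j => (hν j).ne'
  -- notation for diagonal matrices
  set g : Fin d → ℝ := fun j => (ν j)⁻¹ with hg
  set f1 : Fin d → ℝ := fun j => (ν j)⁻¹ + lam with hf1
  set f2 : Fin d → ℝ := fun j => ((ν j)⁻¹ + lam) + lam * (ν j)⁻¹ with hf2
  have hf2pos : ∀ j, 0 < f2 j := fun j => by
    have h1 : 0 < (ν j)⁻¹ := inv_pos.mpr (hν j)
    have h2 : 0 ≤ lam * (ν j)⁻¹ := mul_nonneg hlam h1.le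
    simp only [hf2]
    linarith
  have hDg : Matrix.diagonal ν * Matrix.diagonal g = 1 := by
    have e : (fun i => ν i * g i) = fun _ : Fin d => (1:ℝ) := by
      funext j
      simp only [hg]
      exact mul_inv_cancel₀ (hνne j)
    rw [Matrix.diagonal_mul_diagonal, e, Matrix.diagonal_one]
  have cD : ∀ X : Matrix (Fin d) (Fin d) ℝ,
      Matrix.diagonal ν * (Matrix.diagonal g * X) = X := fun X => by
    rw [← Matrix.mul_assoc, hDg, Matrix.one_mul]
  have hDf : Matrix.diagonal f2 * Matrix.diagonal (fun j => (f2 j)⁻¹) = 1 := by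
    have e : (fun i => f2 i * (f2 i)⁻¹) = fun _ : Fin d => (1:ℝ) := by
      funext j
      exact mul_inv_cancel₀ (hf2pos j).ne'
    rw [Matrix.diagonal_mul_diagonal, e, Matrix.diagonal_one]
  have cF : ∀ X : Matrix (Fin d) (Fin d) ℝ,
      Matrix.diagonal f2 * (Matrix.diagonal (fun j => (f2 j)⁻¹) * X) = X := fun X => by
    rw [← Matrix.mul_assoc, hDf, Matrix.one_mul]
  -- express VB
  have hVBinv : VB⁻¹ = R⁻¹ * (U * (Matrix.diagonal ν * (Uᵀ * R⁻¹))) := by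
    have : R⁻¹ * ((R * VB⁻¹ * R) * R⁻¹) = R⁻¹ * ((U * Matrix.diagonal ν * Uᵀ) * R⁻¹) := by
      rw [hM]
    simp only [Matrix.mul_assoc, hRR, Matrix.mul_one, c1] at this
    simpa [Matrix.mul_assoc] using this
  have hVB2 : VB = R * (U * (Matrix.diagonal g * (Uᵀ * R))) := by
    have h1 : VB⁻¹ * (R * (U * (Matrix.diagonal g * (Uᵀ * R)))) = 1 := by
      rw [hVBinv]
      simp only [Matrix.mul_assoc, c1, c2, c3, c4, cD]
      exact hRR'
    calc VB = VB * (VB⁻¹ * (R * (U * (Matrix.diagonal g * (Uᵀ * R))))) := by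
          rw [h1, Matrix.mul_one]
      _ = (VB * VB⁻¹) * (R * (U * (Matrix.diagonal g * (Uᵀ * R)))) := by
          rw [Matrix.mul_assoc]
      _ = R * (U * (Matrix.diagonal g * (Uᵀ * R))) := by
          rw [Matrix.mul_nonsing_inv _ hVBdet, Matrix.one_mul]
  -- express lam • VS and lam • VB
  have hconst : Matrix.diagonal (fun _ : Fin d => lam) = lam • (1 : Matrix (Fin d) (Fin d) ℝ) := by
    have e : (fun _ : Fin d => lam) = lam • fun _ : Fin d => (1:ℝ) := by
      funext i
      simp
    rw [e, Matrix.diagonal_smul, Matrix.diagonal_one]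
  have hlamVS : lam • VS = R * (U * (Matrix.diagonal (fun _ => lam) * (Uᵀ * R))) := by
    rw [hconst, ← hRsq]
    simp only [smul_mul_assoc, mul_smul_comm, Matrix.one_mul]
    rw [c4]
  have hlamVB : lam • VB = R * (U * (Matrix.diagonal (fun j => lam * (ν j)⁻¹) * (Uᵀ * R))) := by
    rw [hVB2, show Matrix.diagonal (fun j => lam * (ν j)⁻¹) = lam • Matrix.diagonal g by
      rw [← Matrix.diagonal_smul]; congr 1]
    simp only [smul_mul_assoc, mul_smul_comm]
  -- the two key matrices
  have hB : VB + lam • VS = R * (U * (Matrix.diagonal f1 * (Uᵀ * R))) := by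
    rw [hVB2, hlamVS, ← Matrix.mul_add, ← Matrix.mul_add, ← Matrix.add_mul,
      Matrix.diagonal_add]
  have hA : VB + lam • VS + lam • VB = R * (U * (Matrix.diagonal f2 * (Uᵀ * R))) := by
    rw [hB, hlamVB, ← Matrix.mul_add, ← Matrix.mul_add, ← Matrix.add_mul,
      Matrix.diagonal_add]
  -- the inverse
  have hAinv : (VB + lam • VS + lam • VB)⁻¹
      = R⁻¹ * (U * (Matrix.diagonal (fun j => (f2 j)⁻¹) * (Uᵀ * R⁻¹))) := by
    apply Matrix.inv_eq_right_inv
    rw [hA]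
    simp only [Matrix.mul_assoc, c1, c2, c3, c4, cF]
    exact hRR
  -- the product
  have hprod : (VB + lam • VS + lam • VB)⁻¹ * (VB + lam • VS)
      = (R⁻¹ * U) * Matrix.diagonal (fun j => (f2 j)⁻¹ * f1 j) * (Uᵀ * R) := by
    rw [hAinv, hB, ← Matrix.diagonal_mul_diagonal]
    simp only [Matrix.mul_assoc, c1, c2, c3, c4]
  -- compute the trace
  rw [hprod, Matrix.trace_mul_cycle,
    show (Uᵀ * R) * (R⁻¹ * U) = 1 by
      simp only [Matrix.mul_assoc, c2]; exact hU,
    Matrix.one_mul, Matrix.trace_diagonal]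
  refine Finset.sum_congr rfl fun j _ => ?_
  have hνj := hν j
  have hd2 : (0:ℝ) < 1 + lam + lam * ν j := by nlinarith
  have hf2j := hf2pos j
  simp only [hf2, hf1]
  field_simp
  ring
end

section
/- With V_T = V_S positive definite, β̂ = W_λ β̂_S + (I−W_λ) β̂_B where β̂_S, β̂_B are independent with E β̂_S = β, Cov β̂_S = σ_S² V_S⁻¹, E β̂_B = β+γ, Cov β̂_B = σ_B² V_B⁻¹. Then E‖X_S(β̂−β)‖² = σ_S² Σ_j (1+λν_j)²/(1+λ+λν_j)² + Σ_j λ²κ_j²/(1+λ+λν_j)², where κ_j² = u_j^T V_S^{1/2} Θ V_S^{1/2} u_j, Θ = γγ^T + σ_B² V_B⁻¹, and M = V_S^{1/2}V_B⁻¹V_S^{1/2} = U diag(ν_j) U^T is a spectral decomposition with orthonormal columns u_j. -/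
open Matrix MeasureTheory BigOperators

private lemma partA_aux {d : ℕ} {Ω : Type*} [MeasurableSpace Ω] (P : Measure Ω)
    [IsProbabilityMeasure P]
    (VS VB : Matrix (Fin d) (Fin d) ℝ)
    (β γ : Fin d → ℝ) (σS σB : ℝ)
    (bS bB : Ω → Fin d → ℝ)
    (hIntS : ∀ i, Integrable (fun ω => bS ω i) P)
    (hIntB : ∀ i, Integrable (fun ω => bB ω i) P)
    (hIntSS : ∀ i j, Integrable (fun ω => bS ω i * bS ω j) P)
    (hIntBB : ∀ i j, Integrable (fun ω => bB ω i * bB ω j) P)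
    (hIntSB : ∀ i j, Integrable (fun ω => bS ω i * bB ω j) P)
    (hmeanS : ∀ i, ∫ ω, bS ω i ∂P = β i)
    (hmeanB : ∀ i, ∫ ω, bB ω i ∂P = β i + γ i)
    (hcovS : ∀ i j, ∫ ω, (bS ω i - β i) * (bS ω j - β j) ∂P = σS^2 * VS⁻¹ i j)
    (hcovB : ∀ i j, ∫ ω, (bB ω i - β i - γ i) * (bB ω j - β j - γ j) ∂P
        = σB^2 * VB⁻¹ i j)
    (hcross : ∀ i j, ∫ ω, (bS ω i - β i) * (bB ω j - β j - γ j) ∂P = 0)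
    (A B : Matrix (Fin d) (Fin d) ℝ) (hAB : A + B = 1) :
    ∫ ω, (A.mulVec (bS ω) + B.mulVec (bB ω) - β) ⬝ᵥ VS.mulVec
        (A.mulVec (bS ω) + B.mulVec (bB ω) - β) ∂P
    = ∑ i, ∑ j, VS i j * (σS^2 * (A * VS⁻¹ * Aᵀ) i j + σB^2 * (B * VB⁻¹ * Bᵀ) i j
        + (B.mulVec γ) i * (B.mulVec γ) j) := by
  classical
  set zS : Fin d → Ω → ℝ := fun k ω => bS ω k - β k with hzS
  set zB : Fin d → Ω → ℝ := fun k ω => bB ω k - β k - γ k with hzB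
  set c : Fin d → ℝ := B.mulVec γ with hc
  set v : Fin d → Ω → ℝ :=
    fun i ω => c i + (∑ k, A i k * zS k ω) + (∑ k, B i k * zB k ω) with hv
  have hizS : ∀ k, Integrable (zS k) P := fun k => (hIntS k).sub (integrable_const _)
  have hizB : ∀ k, Integrable (zB k) P := fun k =>
    ((hIntB k).sub (integrable_const _)).sub (integrable_const _)
  have hmzS : ∀ k, ∫ ω, zS k ω ∂P = 0 := by
    intro k
    simp only [hzS]
    rw [integral_sub (hIntS k) (integrable_const _), hmeanS k, integral_const]
    simp
  have hmzB : ∀ k, ∫ ω, zB k ω ∂P = 0 := by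
    intro k
    simp only [hzB]
    rw [integral_sub (show Integrable (fun ω => bB ω k - β k) P from
        (hIntB k).sub (integrable_const _)) (integrable_const _),
      integral_sub (hIntB k) (integrable_const _), hmeanB k, integral_const, integral_const]
    simp
  have hizSS : ∀ k l, Integrable (fun ω => zS k ω * zS l ω) P := by
    intro k l
    have hfun : (fun ω => zS k ω * zS l ω)
        = fun ω => bS ω k * bS ω l - β k * bS ω l - β l * bS ω k + β k * β l := by
      funext ω; simp only [hzS]; ring
    rw [hfun]
    exact (((hIntSS k l).sub ((hIntS l).const_mul _)).sub ((hIntS k).const_mul _)).add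
      (integrable_const _)
  have hizBB : ∀ k l, Integrable (fun ω => zB k ω * zB l ω) P := by
    intro k l
    have hfun : (fun ω => zB k ω * zB l ω)
        = fun ω => bB ω k * bB ω l - (β k + γ k) * bB ω l - (β l + γ l) * bB ω k
          + (β k + γ k) * (β l + γ l) := by
      funext ω; simp only [hzB]; ring
    rw [hfun]
    exact (((hIntBB k l).sub ((hIntB l).const_mul _)).sub ((hIntB k).const_mul _)).add
      (integrable_const _)
  have hizSB : ∀ k l, Integrable (fun ω => zS k ω * zB l ω) P := by
    intro k l
    have hfun : (fun ω => zS k ω * zB l ω)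
        = fun ω => bS ω k * bB ω l - (β l + γ l) * bS ω k - β k * bB ω l
          + β k * (β l + γ l) := by
      funext ω; simp only [hzS, hzB]; ring
    rw [hfun]
    exact (((hIntSB k l).sub ((hIntS k).const_mul _)).sub ((hIntB l).const_mul _)).add
      (integrable_const _)
  have hmSS : ∀ k l, ∫ ω, zS k ω * zS l ω ∂P = σS^2 * VS⁻¹ k l := by
    intro k l; simp only [hzS]; exact hcovS k l
  have hmBB : ∀ k l, ∫ ω, zB k ω * zB l ω ∂P = σB^2 * VB⁻¹ k l := by
    intro k l; simp only [hzB]; exact hcovB k l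
  have hmSB : ∀ k l, ∫ ω, zS k ω * zB l ω ∂P = 0 := by
    intro k l; simp only [hzS, hzB]; exact hcross k l
  have hexp : ∀ i j : Fin d, (fun ω => v i ω * v j ω)
      = fun ω =>
        (∑ k, ∑ l, (A i k * A j l * (zS k ω * zS l ω)
          + A i k * B j l * (zS k ω * zB l ω)
          + B i k * A j l * (zS l ω * zB k ω)
          + B i k * B j l * (zB k ω * zB l ω)))
        + (∑ k, ((c j * A i k + c i * A j k) * zS k ω
            + (c j * B i k + c i * B j k) * zB k ω))
        + c i * c j := by
    intro i j
    funext ω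
    simp only [hv]
    have e1 : (∑ k, A i k * zS k ω) * (∑ l, A j l * zS l ω)
        = ∑ k, ∑ l, A i k * A j l * (zS k ω * zS l ω) := by
      rw [Fintype.sum_mul_sum]
      exact Finset.sum_congr rfl fun k _ => Finset.sum_congr rfl fun l _ => by ring
    have e2 : (∑ k, A i k * zS k ω) * (∑ l, B j l * zB l ω)
        = ∑ k, ∑ l, A i k * B j l * (zS k ω * zB l ω) := by
      rw [Fintype.sum_mul_sum]
      exact Finset.sum_congr rfl fun k _ => Finset.sum_congr rfl fun l _ => by ring
    have e3 : (∑ k, B i k * zB k ω) * (∑ l, A j l * zS l ω)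
        = ∑ k, ∑ l, B i k * A j l * (zS l ω * zB k ω) := by
      rw [Fintype.sum_mul_sum]
      exact Finset.sum_congr rfl fun k _ => Finset.sum_congr rfl fun l _ => by ring
    have e4 : (∑ k, B i k * zB k ω) * (∑ l, B j l * zB l ω)
        = ∑ k, ∑ l, B i k * B j l * (zB k ω * zB l ω) := by
      rw [Fintype.sum_mul_sum]
      exact Finset.sum_congr rfl fun k _ => Finset.sum_congr rfl fun l _ => by ring
    have l1 : c j * (∑ k, A i k * zS k ω) = ∑ k, (c j * A i k) * zS k ω := by
      rw [Finset.mul_sum]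
      exact Finset.sum_congr rfl fun k _ => by ring
    have l2 : c i * (∑ k, A j k * zS k ω) = ∑ k, (c i * A j k) * zS k ω := by
      rw [Finset.mul_sum]
      exact Finset.sum_congr rfl fun k _ => by ring
    have l3 : c j * (∑ k, B i k * zB k ω) = ∑ k, (c j * B i k) * zB k ω := by
      rw [Finset.mul_sum]
      exact Finset.sum_congr rfl fun k _ => by ring
    have l4 : c i * (∑ k, B j k * zB k ω) = ∑ k, (c i * B j k) * zB k ω := by
      rw [Finset.mul_sum]
      exact Finset.sum_congr rfl fun k _ => by ring
    calc (c i + (∑ k, A i k * zS k ω) + (∑ k, B i k * zB k ω))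
          * (c j + (∑ k, A j k * zS k ω) + (∑ k, B j k * zB k ω))
        = (∑ k, ∑ l, A i k * A j l * (zS k ω * zS l ω))
          + (∑ k, ∑ l, A i k * B j l * (zS k ω * zB l ω))
          + (∑ k, ∑ l, B i k * A j l * (zS l ω * zB k ω))
          + (∑ k, ∑ l, B i k * B j l * (zB k ω * zB l ω))
          + ((∑ k, (c j * A i k) * zS k ω) + (∑ k, (c i * A j k) * zS k ω)
            + (∑ k, (c j * B i k) * zB k ω) + (∑ k, (c i * B j k) * zB k ω))
          + c i * c j := by
          rw [← e1, ← e2, ← e3, ← e4, ← l1, ← l2, ← l3, ← l4]; ring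
      _ = _ := by
          simp only [add_mul, Finset.sum_add_distrib]
          ring
  have hvint : ∀ i j, Integrable (fun ω => v i ω * v j ω) P := by
    intro i j
    rw [hexp i j]
    refine Integrable.add (Integrable.add ?_ ?_) (integrable_const _)
    · refine integrable_finset_sum _ fun k _ => integrable_finset_sum _ fun l _ => ?_
      exact ((((hizSS k l).const_mul _).add ((hizSB k l).const_mul _)).add
        ((hizSB l k).const_mul _)).add ((hizBB k l).const_mul _)
    · exact integrable_finset_sum _ fun k _ =>
        ((hizS k).const_mul _).add ((hizB k).const_mul _)
  have hkey : ∀ i j, ∫ ω, v i ω * v j ω ∂P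
      = σS^2 * (A * VS⁻¹ * Aᵀ) i j + σB^2 * (B * VB⁻¹ * Bᵀ) i j + c i * c j := by
    intro i j
    have iDSkl : ∀ k l, Integrable (fun ω => A i k * A j l * (zS k ω * zS l ω)
        + A i k * B j l * (zS k ω * zB l ω) + B i k * A j l * (zS l ω * zB k ω)
        + B i k * B j l * (zB k ω * zB l ω)) P := fun k l =>
      ((((hizSS k l).const_mul _).add ((hizSB k l).const_mul _)).add
        ((hizSB l k).const_mul _)).add ((hizBB k l).const_mul _)
    have iDS : Integrable (fun ω => ∑ k, ∑ l, (A i k * A j l * (zS k ω * zS l ω)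
        + A i k * B j l * (zS k ω * zB l ω) + B i k * A j l * (zS l ω * zB k ω)
        + B i k * B j l * (zB k ω * zB l ω))) P :=
      integrable_finset_sum _ fun k _ => integrable_finset_sum _ fun l _ => iDSkl k l
    have iLk : ∀ k : Fin d, Integrable (fun ω => (c j * A i k + c i * A j k) * zS k ω
        + (c j * B i k + c i * B j k) * zB k ω) P := fun k =>
      ((hizS k).const_mul _).add ((hizB k).const_mul _)
    have iL : Integrable (fun ω => ∑ k, ((c j * A i k + c i * A j k) * zS k ω
        + (c j * B i k + c i * B j k) * zB k ω)) P :=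
      integrable_finset_sum _ fun k _ => iLk k
    have iDSL : Integrable (fun ω => (∑ k, ∑ l, (A i k * A j l * (zS k ω * zS l ω)
        + A i k * B j l * (zS k ω * zB l ω) + B i k * A j l * (zS l ω * zB k ω)
        + B i k * B j l * (zB k ω * zB l ω)))
        + ∑ k, ((c j * A i k + c i * A j k) * zS k ω
            + (c j * B i k + c i * B j k) * zB k ω)) P := iDS.add iL
    rw [hexp i j, integral_add iDSL (integrable_const _), integral_add iDS iL,
      integral_finset_sum _ (fun k _ => integrable_finset_sum _ fun l _ => iDSkl k l),
      integral_finset_sum _ (fun k _ => iLk k), integral_const]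
    have hDS : ∀ k l : Fin d, ∫ ω, (A i k * A j l * (zS k ω * zS l ω)
        + A i k * B j l * (zS k ω * zB l ω) + B i k * A j l * (zS l ω * zB k ω)
        + B i k * B j l * (zB k ω * zB l ω)) ∂P
        = A i k * A j l * (σS^2 * VS⁻¹ k l) + B i k * B j l * (σB^2 * VB⁻¹ k l) := by
      intro k l
      have i1 : Integrable (fun ω => A i k * A j l * (zS k ω * zS l ω)) P :=
        (hizSS k l).const_mul _
      have i2 : Integrable (fun ω => A i k * B j l * (zS k ω * zB l ω)) P :=
        (hizSB k l).const_mul _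
      have i3 : Integrable (fun ω => B i k * A j l * (zS l ω * zB k ω)) P :=
        (hizSB l k).const_mul _
      have i4 : Integrable (fun ω => B i k * B j l * (zB k ω * zB l ω)) P :=
        (hizBB k l).const_mul _
      have i12 : Integrable (fun ω => A i k * A j l * (zS k ω * zS l ω)
          + A i k * B j l * (zS k ω * zB l ω)) P := i1.add i2
      have i123 : Integrable (fun ω => A i k * A j l * (zS k ω * zS l ω)
          + A i k * B j l * (zS k ω * zB l ω) + B i k * A j l * (zS l ω * zB k ω)) P :=
        i12.add i3
      rw [integral_add i123 i4, integral_add i12 i3, integral_add i1 i2,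
        integral_const_mul, integral_const_mul, integral_const_mul, integral_const_mul,
        hmSS k l, hmSB k l, hmSB l k, hmBB k l]
      ring
    have hL : ∀ k : Fin d, ∫ ω, ((c j * A i k + c i * A j k) * zS k ω
        + (c j * B i k + c i * B j k) * zB k ω) ∂P = 0 := by
      intro k
      have j1 : Integrable (fun ω => (c j * A i k + c i * A j k) * zS k ω) P :=
        (hizS k).const_mul _
      have j2 : Integrable (fun ω => (c j * B i k + c i * B j k) * zB k ω) P :=
        (hizB k).const_mul _
      rw [integral_add j1 j2, integral_const_mul, integral_const_mul, hmzS k, hmzB k]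
      ring
    rw [Finset.sum_congr rfl fun k (_ : k ∈ Finset.univ) =>
      integral_finset_sum _ (fun l (_ : l ∈ Finset.univ) => iDSkl k l)]
    rw [Finset.sum_congr rfl fun k (_ : k ∈ Finset.univ) =>
      Finset.sum_congr rfl fun l (_ : l ∈ Finset.univ) => hDS k l]
    rw [Finset.sum_congr rfl fun k (_ : k ∈ Finset.univ) => hL k]
    simp only [Finset.sum_const_zero, Finset.sum_add_distrib, measure_univ, ENNReal.toReal_one, probReal_univ, one_mul,
      one_smul, smul_eq_mul]
    have hS1 : ∑ k, ∑ l, A i k * A j l * (σS^2 * VS⁻¹ k l)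
        = σS^2 * (A * VS⁻¹ * Aᵀ) i j := by
      simp only [Matrix.mul_apply, Matrix.transpose_apply, Finset.sum_mul, Finset.mul_sum]
      rw [Finset.sum_comm]
      exact Finset.sum_congr rfl fun l _ => Finset.sum_congr rfl fun k _ => by ring
    have hS2 : ∑ k, ∑ l, B i k * B j l * (σB^2 * VB⁻¹ k l)
        = σB^2 * (B * VB⁻¹ * Bᵀ) i j := by
      simp only [Matrix.mul_apply, Matrix.transpose_apply, Finset.sum_mul, Finset.mul_sum]
      rw [Finset.sum_comm]
      exact Finset.sum_congr rfl fun l _ => Finset.sum_congr rfl fun k _ => by ring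
    rw [hS1, hS2]
    ring
  have hvrepr : ∀ ω, A.mulVec (bS ω) + B.mulVec (bB ω) - β = fun i => v i ω := by
    intro ω
    funext i
    simp only [Matrix.mulVec, dotProduct, Pi.add_apply, Pi.sub_apply, hv, hzS, hzB, hc]
    have hβ : ∑ k, A i k * β k + ∑ k, B i k * β k = β i := by
      have h1 : (A + B) *ᵥ β = β := by rw [hAB, Matrix.one_mulVec]
      have h2 := congrFun h1 i
      simp only [Matrix.mulVec, dotProduct, Matrix.add_apply] at h2
      rw [← h2, ← Finset.sum_add_distrib]
      exact Finset.sum_congr rfl fun k _ => by ring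
    have eA : ∑ k, A i k * (bS ω k - β k)
        = (∑ k, A i k * bS ω k) - ∑ k, A i k * β k := by
      rw [← Finset.sum_sub_distrib]
      exact Finset.sum_congr rfl fun k _ => by ring
    have eB : ∑ k, B i k * (bB ω k - β k - γ k)
        = (∑ k, B i k * bB ω k) - (∑ k, B i k * β k) - ∑ k, B i k * γ k := by
      rw [← Finset.sum_sub_distrib, ← Finset.sum_sub_distrib]
      exact Finset.sum_congr rfl fun k _ => by ring
    rw [eA, eB]
    linarith [hβ]
  have hpt : ∀ ω, (A.mulVec (bS ω) + B.mulVec (bB ω) - β) ⬝ᵥ VS.mulVec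
      (A.mulVec (bS ω) + B.mulVec (bB ω) - β) = ∑ i, ∑ j, VS i j * (v i ω * v j ω) := by
    intro ω
    rw [hvrepr ω]
    simp only [dotProduct, Matrix.mulVec, Finset.mul_sum]
    exact Finset.sum_congr rfl fun i _ => Finset.sum_congr rfl fun j _ => by ring
  calc ∫ ω, (A.mulVec (bS ω) + B.mulVec (bB ω) - β) ⬝ᵥ VS.mulVec
        (A.mulVec (bS ω) + B.mulVec (bB ω) - β) ∂P
      = ∫ ω, ∑ i, ∑ j, VS i j * (v i ω * v j ω) ∂P :=
        integral_congr_ae (Filter.Eventually.of_forall hpt)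
    _ = ∑ i, ∑ j, VS i j * ∫ ω, v i ω * v j ω ∂P := by
        rw [integral_finset_sum _ (fun i _ => integrable_finset_sum _
          (fun j _ => (hvint i j).const_mul (VS i j)))]
        refine Finset.sum_congr rfl fun i _ => ?_
        rw [integral_finset_sum _ (fun j _ => (hvint i j).const_mul (VS i j))]
        exact Finset.sum_congr rfl fun j _ => integral_const_mul _ _
    _ = ∑ i, ∑ j, VS i j * (σS^2 * (A * VS⁻¹ * Aᵀ) i j + σB^2 * (B * VB⁻¹ * Bᵀ) i j
        + c i * c j) :=
      Finset.sum_congr rfl fun i _ => Finset.sum_congr rfl fun j _ => by rw [hkey i j]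


/-- Predictive mean squared error of the data enriched estimator
`β̂ = W_λ β̂_S + (I − W_λ) β̂_B` (with `V_T = V_S`):
`E‖X_S(β̂−β)‖² = σ_S² Σ_j (1+λν_j)²/(1+λ+λν_j)² + Σ_j λ²κ_j²/(1+λ+λν_j)²`,
where `κ_j² = u_jᵀ V_S^{1/2} Θ V_S^{1/2} u_j`, `Θ = γγᵀ + σ_B² V_B⁻¹`, and
`M = V_S^{1/2} V_B⁻¹ V_S^{1/2} = U diag(ν) Uᵀ` orthogonally. -/
theorem stmt5 {d : ℕ} {Ω : Type*} [MeasurableSpace Ω]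
    (P : Measure Ω) [IsProbabilityMeasure P]
    (VS VB : Matrix (Fin d) (Fin d) ℝ) (hVS : VS.PosDef) (hVB : VB.PosDef)
    (β γ : Fin d → ℝ) (σS σB : ℝ) (hσS : 0 < σS) (hσB : 0 < σB)
    (bS bB : Ω → Fin d → ℝ)
    (hIntS : ∀ i, Integrable (fun ω => bS ω i) P)
    (hIntB : ∀ i, Integrable (fun ω => bB ω i) P)
    (hIntSS : ∀ i j, Integrable (fun ω => bS ω i * bS ω j) P)
    (hIntBB : ∀ i j, Integrable (fun ω => bB ω i * bB ω j) P)
    (hIntSB : ∀ i j, Integrable (fun ω => bS ω i * bB ω j) P)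
    (hmeanS : ∀ i, ∫ ω, bS ω i ∂P = β i)
    (hmeanB : ∀ i, ∫ ω, bB ω i ∂P = β i + γ i)
    (hcovS : ∀ i j, ∫ ω, (bS ω i - β i) * (bS ω j - β j) ∂P = σS^2 * VS⁻¹ i j)
    (hcovB : ∀ i j, ∫ ω, (bB ω i - β i - γ i) * (bB ω j - β j - γ j) ∂P
        = σB^2 * VB⁻¹ i j)
    (hcross : ∀ i j, ∫ ω, (bS ω i - β i) * (bB ω j - β j - γ j) ∂P = 0)
    (lam : ℝ) (hlam : 0 ≤ lam)
    (R : Matrix (Fin d) (Fin d) ℝ) (hRpd : R.PosDef) (hRsq : R * R = VS)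
    (ν : Fin d → ℝ) (U : Matrix (Fin d) (Fin d) ℝ) (hU : Uᵀ * U = 1)
    (hM : R * VB⁻¹ * R = U * Matrix.diagonal ν * Uᵀ) :
    (∫ ω, (((VB + lam • VS + lam • VB)⁻¹ * (VB + lam • VS)).mulVec (bS ω)
            + ((1 : Matrix (Fin d) (Fin d) ℝ)
                - (VB + lam • VS + lam • VB)⁻¹ * (VB + lam • VS)).mulVec (bB ω)
            - β)
          ⬝ᵥ VS.mulVec
          (((VB + lam • VS + lam • VB)⁻¹ * (VB + lam • VS)).mulVec (bS ω)
            + ((1 : Matrix (Fin d) (Fin d) ℝ)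
                - (VB + lam • VS + lam • VB)⁻¹ * (VB + lam • VS)).mulVec (bB ω)
            - β) ∂P)
      = σS^2 * ∑ j, (1 + lam * ν j)^2 / (1 + lam + lam * ν j)^2
        + ∑ j, lam^2 *
            ((Uᵀ j) ⬝ᵥ (R * (vecMulVec γ γ + σB^2 • VB⁻¹) * R).mulVec (Uᵀ j))
            / (1 + lam + lam * ν j)^2 := by
  classical
  have hRd : IsUnit R.det := hRpd.det_pos.ne'.isUnit
  have hVBd : IsUnit VB.det := hVB.det_pos.ne'.isUnit
  have hUU' : U * Uᵀ = 1 := mul_eq_one_comm.mp hU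
  have hUd : IsUnit U.det := by
    have h := congrArg Matrix.det hU
    rw [Matrix.det_mul, Matrix.det_transpose, Matrix.det_one] at h
    exact IsUnit.of_mul_eq_one _ h
  have hUisUnit : IsUnit U := (Matrix.isUnit_iff_isUnit_det U).mpr hUd
  -- cancel helpers
  have hc1 : ∀ X : Matrix (Fin d) (Fin d) ℝ, Uᵀ * (U * X) = X := fun X => by
    rw [← Matrix.mul_assoc, hU, Matrix.one_mul]
  have hc2 : ∀ X : Matrix (Fin d) (Fin d) ℝ, U * (Uᵀ * X) = X := fun X => by
    rw [← Matrix.mul_assoc, hUU', Matrix.one_mul]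
  have hc3 : ∀ X : Matrix (Fin d) (Fin d) ℝ, R * (R⁻¹ * X) = X := fun X =>
    Matrix.mul_nonsing_inv_cancel_left R X hRd
  have hc4 : ∀ X : Matrix (Fin d) (Fin d) ℝ, R⁻¹ * (R * X) = X := fun X =>
    Matrix.nonsing_inv_mul_cancel_left R X hRd
  have hRR : R * R⁻¹ = 1 := Matrix.mul_nonsing_inv R hRd
  have hRR' : R⁻¹ * R = 1 := Matrix.nonsing_inv_mul R hRd
  have hVBc : ∀ X : Matrix (Fin d) (Fin d) ℝ, VB * (VB⁻¹ * X) = X := fun X =>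
    Matrix.mul_nonsing_inv_cancel_left VB X hVBd
  -- symmetry
  have hRsym : Rᵀ = R := by
    have := hRpd.isHermitian
    rwa [Matrix.IsHermitian, Matrix.conjTranspose_eq_transpose_of_trivial] at this
  have hVSsym : VSᵀ = VS := by
    have := hVS.isHermitian
    rwa [Matrix.IsHermitian, Matrix.conjTranspose_eq_transpose_of_trivial] at this
  have hRinvsym : (R⁻¹)ᵀ = R⁻¹ := by rw [Matrix.transpose_nonsing_inv, hRsym]
  have hVSinv : VS⁻¹ = R⁻¹ * R⁻¹ := by rw [← hRsq, Matrix.mul_inv_rev]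
  -- diagonal entry lemma
  have hdiag : ∀ (W : Matrix (Fin d) (Fin d) ℝ) (j : Fin d),
      (Uᵀ * W * U) j j = (Uᵀ j) ⬝ᵥ (W *ᵥ (Uᵀ j)) := by
    intro W j
    simp only [Matrix.mul_apply, Matrix.transpose_apply, dotProduct, Matrix.mulVec,
      Finset.sum_mul, Finset.mul_sum]
    rw [Finset.sum_comm]
    exact Finset.sum_congr rfl fun k _ => Finset.sum_congr rfl fun l _ => by ring
  have hDD : Matrix.diagonal ν = Uᵀ * (R * VB⁻¹ * R) * U := by
    rw [hM]
    simp [Matrix.mul_assoc, hc1, hU, Matrix.mul_one]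
  have hν : ∀ j, 0 < ν j := by
    intro j
    have hx : (Uᵀ j) ≠ 0 := by
      intro h
      have h1 := congrFun (congrFun hU j) j
      simp only [Matrix.mul_apply, Matrix.one_apply_eq] at h1
      have h2 : ∀ k, U k j = 0 := fun k => congrFun h k
      simp [Matrix.transpose_apply, h2] at h1
    have hRx : R *ᵥ (Uᵀ j) ≠ 0 := by
      intro h
      apply hx
      have h2 := congrArg (fun y => R⁻¹ *ᵥ y) h
      simpa [Matrix.mulVec_mulVec, hRR', Matrix.one_mulVec] using h2
    have h3 : ν j = (R *ᵥ (Uᵀ j)) ⬝ᵥ (VB⁻¹ *ᵥ (R *ᵥ (Uᵀ j))) := by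
      have h4 : ν j = (Uᵀ j) ⬝ᵥ ((R * VB⁻¹ * R) *ᵥ (Uᵀ j)) := by
        rw [← hdiag, ← hDD, Matrix.diagonal_apply_eq]
      rw [h4, ← Matrix.mulVec_mulVec, ← Matrix.mulVec_mulVec,
        dotProduct_mulVec, ← hRsym, Matrix.vecMul_transpose, hRsym]
    rw [h3]
    have := hVB.inv.dotProduct_mulVec_pos hRx
    simpa using this
  have he : ∀ j, (1 + lam + lam * ν j) ≠ 0 := fun j => by nlinarith [hν j]
  set e : Fin d → ℝ := fun j => 1 + lam + lam * ν j with hedef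
  set Fd : Matrix (Fin d) (Fin d) ℝ := Matrix.diagonal (fun j => (1 + lam * ν j) / e j)
    with hFdef
  set G : Matrix (Fin d) (Fin d) ℝ := Matrix.diagonal (fun j => lam / e j) with hGdef
  have hN : VB⁻¹ * VS = R⁻¹ * (U * Matrix.diagonal ν * Uᵀ) * R := by
    have hMinv : VB⁻¹ = R⁻¹ * (R * VB⁻¹ * R) * R⁻¹ := by
      simp [Matrix.mul_assoc, hc4, hRR, Matrix.mul_one]
    rw [hMinv, hM, ← hRsq]
    simp [Matrix.mul_assoc, hc4, hRR', Matrix.mul_one]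
  have hconj : ∀ a b : ℝ, a • (1 : Matrix (Fin d) (Fin d) ℝ) + b • (VB⁻¹ * VS)
      = R⁻¹ * (U * Matrix.diagonal (fun j => a + b * ν j) * Uᵀ) * R := by
    intro a b
    have hd : Matrix.diagonal (fun j => a + b * ν j)
        = a • (1 : Matrix (Fin d) (Fin d) ℝ) + b • Matrix.diagonal ν := by
      ext i k
      by_cases h : i = k
      · subst h; simp
      · simp [Matrix.diagonal_apply_ne _ h, Matrix.one_apply_ne h]
    rw [hd, hN]
    simp only [Matrix.mul_add, Matrix.add_mul, Matrix.mul_smul, Matrix.smul_mul,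
      Matrix.mul_one, Matrix.mul_assoc, hc2, hRR', hc4]
  have hT : VB + lam • VS + lam • VB
      = VB * (R⁻¹ * (U * Matrix.diagonal e * Uᵀ) * R) := by
    rw [← hconj (1 + lam) lam]
    simp only [Matrix.mul_add, Matrix.mul_smul, Matrix.mul_one, hVBc, add_smul, one_smul]
    abel
  have hSum : VB + lam • VS
      = VB * (R⁻¹ * (U * Matrix.diagonal (fun j => 1 + lam * ν j) * Uᵀ) * R) := by
    rw [← hconj 1 lam]
    simp only [Matrix.mul_add, Matrix.mul_smul, Matrix.mul_one, hVBc, one_smul]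
  have hTd : IsUnit (VB + lam • VS + lam • VB).det := by
    rw [hT]
    simp only [Matrix.det_mul]
    refine hVBd.mul (((Matrix.isUnit_nonsing_inv_det R hRd).mul
      ((hUd.mul ?_).mul (by rwa [Matrix.det_transpose]))).mul hRd)
    rw [Matrix.det_diagonal]
    exact (Finset.prod_ne_zero_iff.mpr (fun j _ => he j)).isUnit
  have hEF : ∀ X : Matrix (Fin d) (Fin d) ℝ,
      Matrix.diagonal e * (Fd * X) = Matrix.diagonal (fun j => 1 + lam * ν j) * X := by
    intro X
    rw [← Matrix.mul_assoc, hFdef, Matrix.diagonal_mul_diagonal]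
    have h9 : (fun i => e i * ((1 + lam * ν i) / e i)) = fun j => 1 + lam * ν j := by
      funext j
      rw [mul_div_assoc']
      rw [mul_comm]
      exact mul_div_cancel_right₀ _ (he j)
    rw [h9]
  have hW : (VB + lam • VS + lam • VB)⁻¹ * (VB + lam • VS) = R⁻¹ * (U * Fd * Uᵀ) * R := by
    have h2 : (VB + lam • VS + lam • VB) * (R⁻¹ * (U * Fd * Uᵀ) * R) = VB + lam • VS := by
      conv_lhs => rw [hT]
      rw [hSum]
      simp only [Matrix.mul_assoc, hc1, hc2, hc3, hc4, hEF]
    calc (VB + lam • VS + lam • VB)⁻¹ * (VB + lam • VS)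
        = (VB + lam • VS + lam • VB)⁻¹
          * ((VB + lam • VS + lam • VB) * (R⁻¹ * (U * Fd * Uᵀ) * R)) := by rw [h2]
      _ = R⁻¹ * (U * Fd * Uᵀ) * R := Matrix.nonsing_inv_mul_cancel_left _ _ hTd
  have hFG : Fd + G = 1 := by
    rw [hFdef, hGdef, Matrix.diagonal_add, ← Matrix.diagonal_one]
    have h9 : (fun i => (1 + lam * ν i) / e i + lam / e i) = fun _ => (1:ℝ) := by
      funext j
      rw [← add_div, div_eq_one_iff_eq (he j)]
      show 1 + lam * ν j + lam = 1 + lam + lam * ν j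
      ring
    rw [h9]
  have hB : (1 : Matrix (Fin d) (Fin d) ℝ) - (VB + lam • VS + lam • VB)⁻¹ * (VB + lam • VS)
      = R⁻¹ * (U * G * Uᵀ) * R := by
    rw [hW]
    have hsum1 : R⁻¹ * (U * Fd * Uᵀ) * R + R⁻¹ * (U * G * Uᵀ) * R = 1 := by
      rw [← Matrix.add_mul, ← Matrix.mul_add, ← Matrix.add_mul, ← Matrix.mul_add, hFG,
        Matrix.mul_one, hUU', Matrix.mul_one, hRR']
    rw [← hsum1]
    abel
  have hWT : ∀ D : Matrix (Fin d) (Fin d) ℝ, Dᵀ = D →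
      (R⁻¹ * (U * D * Uᵀ) * R)ᵀ = R * (U * D * Uᵀ) * R⁻¹ := by
    intro D hD
    simp [Matrix.transpose_mul, Matrix.transpose_transpose, hD, hRsym, hRinvsym,
      Matrix.mul_assoc]
  have htr1 : Matrix.trace (VS * ((R⁻¹ * (U * Fd * Uᵀ) * R) * VS⁻¹
        * (R⁻¹ * (U * Fd * Uᵀ) * R)ᵀ))
      = ∑ j, ((1 + lam * ν j) / e j)^2 := by
    rw [hWT Fd (Matrix.diagonal_transpose _), hVSinv, ← hRsq]
    simp only [Matrix.mul_assoc, hc1, hc2, hc3, hc4]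
    rw [Matrix.trace_mul_comm]
    simp only [Matrix.mul_assoc, hRR', Matrix.mul_one]
    rw [Matrix.trace_mul_comm]
    simp only [Matrix.mul_assoc, hU, Matrix.mul_one]
    rw [hFdef, Matrix.diagonal_mul_diagonal, Matrix.trace_diagonal]
    exact Finset.sum_congr rfl fun j _ => (sq _).symm
  have tdnd : ∀ (dv : Fin d → ℝ) (N : Matrix (Fin d) (Fin d) ℝ),
      Matrix.trace (Matrix.diagonal dv * (N * Matrix.diagonal dv)) = ∑ j, dv j^2 * N j j := by
    intro dv N
    rw [← Matrix.mul_assoc]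
    simp only [Matrix.trace, Matrix.diag]
    refine Finset.sum_congr rfl fun j _ => ?_
    rw [Matrix.mul_diagonal, Matrix.diagonal_mul]
    ring
  have htr2 : ∀ Θ : Matrix (Fin d) (Fin d) ℝ,
      Matrix.trace (VS * ((R⁻¹ * (U * G * Uᵀ) * R) * Θ * (R⁻¹ * (U * G * Uᵀ) * R)ᵀ))
      = ∑ j, (lam / e j)^2 * ((Uᵀ j) ⬝ᵥ ((R * Θ * R) *ᵥ (Uᵀ j))) := by
    intro Θ
    rw [hWT G (Matrix.diagonal_transpose _), ← hRsq]
    simp only [Matrix.mul_assoc, hc1, hc2, hc3, hc4]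
    rw [Matrix.trace_mul_comm]
    simp only [Matrix.mul_assoc, hRR', Matrix.mul_one]
    rw [Matrix.trace_mul_comm]
    simp only [Matrix.mul_assoc, hU, Matrix.mul_one]
    have hA2 : Uᵀ * (R * (Θ * (R * (U * G)))) = (Uᵀ * (R * Θ * R) * U) * G := by
      simp only [Matrix.mul_assoc]
    rw [hA2, hGdef, tdnd]
    refine Finset.sum_congr rfl fun j _ => ?_
    rw [hdiag (R * Θ * R) j]
    simp only [Matrix.mul_assoc]
  -- Part A: reduce expectation to matrix sums
  have hAB : ((VB + lam • VS + lam • VB)⁻¹ * (VB + lam • VS))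
      + ((1 : Matrix (Fin d) (Fin d) ℝ) - (VB + lam • VS + lam • VB)⁻¹ * (VB + lam • VS))
      = 1 := add_sub_cancel _ _
  rw [partA_aux P VS VB β γ σS σB bS bB hIntS hIntB hIntSS hIntBB hIntSB hmeanS hmeanB
    hcovS hcovB hcross _ _ hAB]
  rw [hB, hW]
  -- sums to traces
  have hVSe : ∀ a b, VS a b = VS b a := by
    intro a b
    conv_lhs => rw [← hVSsym]
    rw [Matrix.transpose_apply]
  have hsum_trace : ∀ N : Matrix (Fin d) (Fin d) ℝ,
      (∑ i, ∑ j, VS i j * N i j) = Matrix.trace (VS * N) := by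
    intro N
    calc ∑ i, ∑ j, VS i j * N i j
        = ∑ j, ∑ i, VS i j * N i j := Finset.sum_comm
      _ = ∑ j, ∑ i, VS j i * N i j := by
          exact Finset.sum_congr rfl fun j _ => Finset.sum_congr rfl fun i _ => by
            rw [hVSe i j]
      _ = Matrix.trace (VS * N) := by
          simp [Matrix.trace, Matrix.diag, Matrix.mul_apply]
  have hsum_trace2 : ∀ (r : ℝ) (N : Matrix (Fin d) (Fin d) ℝ),
      (∑ i, ∑ j, VS i j * (r * N i j)) = r * Matrix.trace (VS * N) := by
    intro r N
    rw [← hsum_trace N, Finset.mul_sum]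
    refine Finset.sum_congr rfl fun i _ => ?_
    rw [Finset.mul_sum]
    exact Finset.sum_congr rfl fun j _ => by ring
  set Wex : Matrix (Fin d) (Fin d) ℝ := R⁻¹ * (U * Fd * Uᵀ) * R with hWex
  set Gex : Matrix (Fin d) (Fin d) ℝ := R⁻¹ * (U * G * Uᵀ) * R with hGex
  have hcc : Matrix.vecMulVec (Gex.mulVec γ) (Gex.mulVec γ)
      = Gex * Matrix.vecMulVec γ γ * Gexᵀ := by
    ext i j
    simp only [Matrix.vecMulVec_apply, Matrix.mul_apply, Matrix.transpose_apply,
      Matrix.mulVec, dotProduct]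
    rw [Fintype.sum_mul_sum]
    rw [Finset.sum_comm]
    simp only [Finset.sum_mul]
    exact Finset.sum_congr rfl fun l _ => Finset.sum_congr rfl fun k _ => by ring
  have hccN : (∑ i, ∑ j, VS i j * (Gex.mulVec γ i * Gex.mulVec γ j))
      = Matrix.trace (VS * (Gex * Matrix.vecMulVec γ γ * Gexᵀ)) := by
    rw [← hcc, ← hsum_trace]
    exact Finset.sum_congr rfl fun i _ => Finset.sum_congr rfl fun j _ => by
      rw [Matrix.vecMulVec_apply]
  have hsplit : (∑ i, ∑ j, VS i j * (σS^2 * (Wex * VS⁻¹ * Wexᵀ) i j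
        + σB^2 * (Gex * VB⁻¹ * Gexᵀ) i j + Gex.mulVec γ i * Gex.mulVec γ j))
      = σS^2 * Matrix.trace (VS * (Wex * VS⁻¹ * Wexᵀ))
        + σB^2 * Matrix.trace (VS * (Gex * VB⁻¹ * Gexᵀ))
        + Matrix.trace (VS * (Gex * Matrix.vecMulVec γ γ * Gexᵀ)) := by
    rw [← hsum_trace2 (σS^2), ← hsum_trace2 (σB^2), ← hccN, ← Finset.sum_add_distrib,
      ← Finset.sum_add_distrib]
    refine Finset.sum_congr rfl fun i _ => ?_
    rw [← Finset.sum_add_distrib, ← Finset.sum_add_distrib]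
    exact Finset.sum_congr rfl fun j _ => by ring
  rw [hsplit]
  have hcomb : σB^2 * Matrix.trace (VS * (Gex * VB⁻¹ * Gexᵀ))
      + Matrix.trace (VS * (Gex * Matrix.vecMulVec γ γ * Gexᵀ))
      = Matrix.trace (VS * (Gex * (Matrix.vecMulVec γ γ + σB^2 • VB⁻¹) * Gexᵀ)) := by
    simp only [Matrix.mul_add, Matrix.add_mul, Matrix.mul_smul, Matrix.smul_mul,
      Matrix.trace_add, Matrix.trace_smul, smul_eq_mul]
    ring
  rw [add_assoc, hcomb, hWex, hGex, htr1, htr2]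
  have final1 : ∀ j, ((1 + lam * ν j) / e j)^2
      = (1 + lam * ν j)^2 / (1 + lam + lam * ν j)^2 := by
    intro j
    simp only [hedef]
    rw [div_pow]
  have final2 : ∀ j, (lam / e j)^2
        * ((Uᵀ j) ⬝ᵥ ((R * (Matrix.vecMulVec γ γ + σB^2 • VB⁻¹) * R) *ᵥ (Uᵀ j)))
      = lam^2 * ((Uᵀ j) ⬝ᵥ ((R * (Matrix.vecMulVec γ γ + σB^2 • VB⁻¹) * R) *ᵥ (Uᵀ j)))
        / (1 + lam + lam * ν j)^2 := by
    intro j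
    simp only [hedef]
    rw [div_pow]
    ring
  rw [Finset.sum_congr rfl fun j (_ : j ∈ Finset.univ) => final1 j,
    Finset.sum_congr rfl fun j (_ : j ∈ Finset.univ) => final2 j]
end

section
/- For the L₁-penalized location criterion F(μ,δ) = Σ_{i∈S}(Y_i−μ)² + Σ_{i∈B}(Y_i−μ−δ)² + 2λ|δ|: if 0 ≤ λ ≤ nN|Ȳ_B−Ȳ_S|/(n+N), then the minimizers are μ̂ = Ȳ_S + (λ/n) sign(Ȳ_B−Ȳ_S) and δ̂ = Ȳ_B−Ȳ_S − λ(N+n)/(Nn) · sign(Ȳ_B−Ȳ_S); if λ > nN|Ȳ_B−Ȳ_S|/(n+N), then δ̂ = 0 and μ̂ = (nȲ_S + NȲ_B)/(n+N). -/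
open BigOperators

lemma sum_split {k : ℕ} (hk : 0 < k) (f : Fin k → ℝ) (c : ℝ) :
    ∑ i, (f i - c)^2 = (∑ i, (f i - (∑ j, f j)/k)^2) + k*((∑ j, f j)/k - c)^2 := by
  have hk' : (k:ℝ) ≠ 0 := Nat.cast_ne_zero.2 hk.ne'
  have e : ∀ c : ℝ, ∑ i, (f i - c)^2
      = (∑ i, (f i)^2) - 2*c*(∑ j, f j) + k*c^2 := by
    intro c
    have : ∀ i : Fin k, (f i - c)^2 = (f i)^2 - (2*c)*(f i) + c^2 := by
      intro i; ring
    rw [Finset.sum_congr rfl (fun i _ => this i)]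
    rw [Finset.sum_add_distrib, Finset.sum_sub_distrib, ← Finset.mul_sum,
      Finset.sum_const, Finset.card_univ, Fintype.card_fin, nsmul_eq_mul]
  rw [e, e]
  field_simp
  ring

lemma aux1 (n N u v a b μ δ : ℝ) (hn : 0 < n) (hN : 0 < N)
    (huv : n*u = N*v) (hu : 0 ≤ u) (hd : u + v ≤ b - a) :
    n*u^2 + N*v^2 + 2*(n*u)*(b - a - u - v)
      ≤ n*(a-μ)^2 + N*(b-μ-δ)^2 + 2*(n*u)*|δ| := by
  have h1 := le_abs_self δ
  have e1 : n*u*(b-μ-δ) = N*v*(b-μ-δ) := by rw [huv]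
  have e2 : n*u*v = N*v*v := by rw [huv]
  nlinarith [mul_nonneg hn.le (sq_nonneg (a-μ+u)), mul_nonneg hN.le (sq_nonneg (b-μ-δ-v)),
    mul_nonneg (mul_nonneg hn.le hu) (sub_nonneg.2 h1)]

lemma aux2 (n N u v a b μ δ : ℝ) (hn : 0 < n) (hN : 0 < N)
    (huv : n*u = N*v) (hu : 0 ≤ u) (hd : u + v ≤ a - b) :
    n*u^2 + N*v^2 + 2*(n*u)*(-(b - a) - u - v)
      ≤ n*(a-μ)^2 + N*(b-μ-δ)^2 + 2*(n*u)*|δ| := by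
  have h1 := neg_abs_le δ
  have e1 : n*u*(b-μ-δ) = N*v*(b-μ-δ) := by rw [huv]
  have e2 : n*u*v = N*v*v := by rw [huv]
  nlinarith [mul_nonneg hn.le (sq_nonneg (a-μ-u)), mul_nonneg hN.le (sq_nonneg (b-μ-δ+v)),
    mul_nonneg (mul_nonneg hn.le hu) (sub_nonneg.2 (neg_le.mp (neg_le_abs δ)))]

lemma aux3 (n N w a b μ δ lam : ℝ) (hn : 0 < n) (hN : 0 < N)
    (hw : w*(n+N) = n*N*(b-a)) (hl1 : w ≤ lam) (hl2 : -w ≤ lam) :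
    w*(b-a) ≤ n*(a-μ)^2 + N*(b-μ-δ)^2 + 2*lam*|δ| := by
  have hP : w*δ ≤ lam*|δ| := by
    rcases le_or_gt 0 δ with h | h
    · rw [abs_of_nonneg h]; nlinarith
    · rw [abs_of_neg h]; nlinarith
  have hw2 : w*(n+N)*w = n*N*(b-a)*w := by rw [hw]
  nlinarith [mul_nonneg hN.le (sq_nonneg (n*(a-μ)+w)), mul_nonneg hn.le (sq_nonneg (N*(b-μ-δ)-w)),
    mul_nonneg (mul_pos hn hN).le (sub_nonneg.2 hP), mul_pos hn hN, hw2]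

/-- L₁-penalized location model: soft-threshold form of the minimizers.
If `0 ≤ λ ≤ nN|Ȳ_B−Ȳ_S|/(n+N)` the minimizers are
`μ̂ = Ȳ_S + (λ/n) sign(Ȳ_B−Ȳ_S)` and
`δ̂ = Ȳ_B−Ȳ_S − λ(N+n)/(Nn) sign(Ȳ_B−Ȳ_S)`; if `λ` exceeds that bound,
`δ̂ = 0` and `μ̂ = (nȲ_S + NȲ_B)/(n+N)`. -/

theorem stmt9 {n N : ℕ} (hn : 0 < n) (hN : 0 < N)
    (YS : Fin n → ℝ) (YB : Fin N → ℝ) (lam : ℝ) (hlam : 0 ≤ lam) :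
    let mS := (∑ i, YS i) / (n : ℝ)
    let mB := (∑ i, YB i) / (N : ℝ)
    let F := fun (μ δ : ℝ) =>
      (∑ i, (YS i - μ)^2) + (∑ i, (YB i - μ - δ)^2) + 2 * lam * |δ|
    (lam ≤ (n : ℝ) * N * |mB - mS| / (n + N) →
      ∀ μ δ, F (mS + (lam / n) * Real.sign (mB - mS))
               (mB - mS - lam * ((N : ℝ) + n) / ((N : ℝ) * n) * Real.sign (mB - mS))
             ≤ F μ δ)
    ∧ ((n : ℝ) * N * |mB - mS| / (n + N) < lam →
      ∀ μ δ, F (((n : ℝ) * mS + N * mB) / (n + N)) 0 ≤ F μ δ) := by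
  intro mS mB F
  have hn0 : (0:ℝ) < n := Nat.cast_pos.2 hn
  have hN0 : (0:ℝ) < N := Nat.cast_pos.2 hN
  have hn' : (n:ℝ) ≠ 0 := hn0.ne'
  have hN' : (N:ℝ) ≠ 0 := hN0.ne'
  have hF : ∀ μ δ : ℝ, F μ δ = (∑ i, (YS i - mS)^2) + (∑ i, (YB i - mB)^2)
      + ((n:ℝ)*(mS-μ)^2 + (N:ℝ)*(mB-μ-δ)^2 + 2*lam*|δ|) := by
    intro μ δ
    have h1 := sum_split hn YS μ
    have h2 := sum_split hN YB (μ+δ)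
    have h2' : ∑ i, (YB i - μ - δ)^2 = ∑ i, (YB i - (μ+δ))^2 := by
      apply Finset.sum_congr rfl; intros; ring
    show (∑ i, (YS i - μ)^2) + (∑ i, (YB i - μ - δ)^2) + 2 * lam * |δ| = _
    rw [h2', h1, h2]
    show _ = (∑ i, (YS i - mS)^2) + (∑ i, (YB i - mB)^2)
      + ((n:ℝ)*(mS-μ)^2 + (N:ℝ)*(mB-μ-δ)^2 + 2*lam*|δ|)
    have emS : mS = (∑ j, YS j)/(n:ℝ) := rfl
    have emB : mB = (∑ j, YB j)/(N:ℝ) := rfl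
    rw [← emS, ← emB]
    ring
  constructor
  · intro h μ δ
    rw [hF, hF]
    refine add_le_add_right ?_ _
    rcases lt_trichotomy mS mB with hd | hd | hd
    · rw [Real.sign_of_pos (sub_pos.2 hd)]
      rw [abs_of_pos (sub_pos.2 hd)] at h
      have h' : lam * ((n:ℝ)+N) ≤ (n:ℝ)*N*(mB-mS) :=
        (le_div_iff₀ (by positivity)).mp h
      have hd' : lam/(n:ℝ) + lam/(N:ℝ) ≤ mB - mS := by
        rw [div_add_div _ _ hn' hN', div_le_iff₀ (by positivity)]
        nlinarith
      have habs : (0:ℝ) ≤ mB - mS - lam * ((N:ℝ) + n) / ((N:ℝ) * n) * 1 := by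
        have e0 : lam*((N:ℝ)+n)/((N:ℝ)*n) = lam/(n:ℝ) + lam/(N:ℝ) := by
          field_simp
        rw [mul_one, e0]; linarith
      calc (n:ℝ)*(mS-(mS + lam/(n:ℝ) * 1))^2
            + (N:ℝ)*(mB-(mS + lam/(n:ℝ) * 1)-(mB - mS - lam * ((N:ℝ) + n) / ((N:ℝ) * n) * 1))^2
            + 2*lam*|mB - mS - lam * ((N:ℝ) + n) / ((N:ℝ) * n) * 1|
          = (n:ℝ)*(lam/(n:ℝ))^2 + (N:ℝ)*(lam/(N:ℝ))^2
            + 2*((n:ℝ)*(lam/(n:ℝ)))*(mB - mS - lam/(n:ℝ) - lam/(N:ℝ)) := by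
            rw [abs_of_nonneg habs]; field_simp; ring
        _ ≤ (n:ℝ)*(mS-μ)^2 + (N:ℝ)*(mB-μ-δ)^2 + 2*((n:ℝ)*(lam/(n:ℝ)))*|δ| :=
            aux1 (n:ℝ) (N:ℝ) (lam/(n:ℝ)) (lam/(N:ℝ)) mS mB μ δ hn0 hN0
              (by field_simp) (by positivity) hd'
        _ = (n:ℝ)*(mS-μ)^2 + (N:ℝ)*(mB-μ-δ)^2 + 2*lam*|δ| := by
            rw [mul_div_cancel₀ _ hn']
    · -- mS = mB
      have hz : mB - mS = 0 := by rw [hd]; ring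
      have hl0 : lam = 0 := by
        rw [hz, abs_zero] at h
        have : (n:ℝ)*N*0/((n:ℝ)+N) = 0 := by ring
        rw [this] at h
        linarith
      rw [hz, Real.sign_zero, hl0]
      simp only [mul_zero, zero_mul, zero_div, sub_zero, add_zero, zero_sub, mul_one]
      have : mB = mS := hd.symm
      rw [this]
      nlinarith [mul_nonneg hn0.le (sq_nonneg (mS-μ)), mul_nonneg hN0.le (sq_nonneg (mS-μ-δ)), abs_nonneg δ]
    · rw [Real.sign_of_neg (sub_neg.2 hd)]
      rw [abs_of_neg (sub_neg.2 hd)] at h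
      have h' : lam * ((n:ℝ)+N) ≤ (n:ℝ)*N*(-(mB-mS)) :=
        (le_div_iff₀ (by positivity)).mp h
      have hd' : lam/(n:ℝ) + lam/(N:ℝ) ≤ mS - mB := by
        rw [div_add_div _ _ hn' hN', div_le_iff₀ (by positivity)]
        nlinarith
      have habs : mB - mS - lam * ((N:ℝ) + n) / ((N:ℝ) * n) * (-1) ≤ 0 := by
        have e0 : lam*((N:ℝ)+n)/((N:ℝ)*n) = lam/(n:ℝ) + lam/(N:ℝ) := by
          field_simp
        rw [mul_neg_one, sub_neg_eq_add, e0]; linarith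
      calc (n:ℝ)*(mS-(mS + lam/(n:ℝ) * (-1)))^2
            + (N:ℝ)*(mB-(mS + lam/(n:ℝ) * (-1))-(mB - mS - lam * ((N:ℝ) + n) / ((N:ℝ) * n) * (-1)))^2
            + 2*lam*|mB - mS - lam * ((N:ℝ) + n) / ((N:ℝ) * n) * (-1)|
          = (n:ℝ)*(lam/(n:ℝ))^2 + (N:ℝ)*(lam/(N:ℝ))^2
            + 2*((n:ℝ)*(lam/(n:ℝ)))*(-(mB - mS) - lam/(n:ℝ) - lam/(N:ℝ)) := by
            rw [abs_of_nonpos habs]; field_simp; ring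
        _ ≤ (n:ℝ)*(mS-μ)^2 + (N:ℝ)*(mB-μ-δ)^2 + 2*((n:ℝ)*(lam/(n:ℝ)))*|δ| :=
            aux2 (n:ℝ) (N:ℝ) (lam/(n:ℝ)) (lam/(N:ℝ)) mS mB μ δ hn0 hN0
              (by field_simp) (by positivity) hd'
        _ = (n:ℝ)*(mS-μ)^2 + (N:ℝ)*(mB-μ-δ)^2 + 2*lam*|δ| := by
            rw [mul_div_cancel₀ _ hn']
  · intro h μ δ
    rw [hF, hF]
    refine add_le_add_right ?_ _
    have habs : |(n:ℝ)*N*(mB-mS)/((n:ℝ)+N)| = (n:ℝ)*N*|mB-mS|/((n:ℝ)+N) := by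
      rw [abs_div, abs_mul, abs_mul, abs_of_pos hn0, abs_of_pos hN0,
        abs_of_pos (by positivity : (0:ℝ) < (n:ℝ)+N)]
    have hl1 : (n:ℝ)*N*(mB-mS)/((n:ℝ)+N) ≤ lam :=
      le_trans (le_abs_self _) (by rw [habs]; exact h.le)
    have hl2 : -((n:ℝ)*N*(mB-mS)/((n:ℝ)+N)) ≤ lam :=
      le_trans (neg_le_abs _) (by rw [habs]; exact h.le)
    calc (n:ℝ)*(mS-((n:ℝ)*mS+N*mB)/((n:ℝ)+N))^2
          + (N:ℝ)*(mB-((n:ℝ)*mS+N*mB)/((n:ℝ)+N)-0)^2 + 2*lam*|(0:ℝ)|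
        = ((n:ℝ)*N*(mB-mS)/((n:ℝ)+N))*(mB-mS) := by
          rw [abs_zero]; field_simp; ring
      _ ≤ (n:ℝ)*(mS-μ)^2 + (N:ℝ)*(mB-μ-δ)^2 + 2*lam*|δ| :=
          aux3 (n:ℝ) (N:ℝ) _ mS mB μ δ lam hn0 hN0 (by field_simp) hl1 hl2
end

section
/- Let η ~ N(0, I_d) in ℝᵈ, b ∈ ℝᵈ fixed, and A, B > 0 constants. Define Z = η + A(b−η)/(‖b−η‖² + B). Then E‖Z‖² < d + E[ A(A + 4 − 2d)/(‖b−η‖² + B) ]. -/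
open MeasureTheory ProbabilityTheory BigOperators
open MeasureTheory ProbabilityTheory Real Filter
open scoped ENNReal NNReal

noncomputable section
namespace S14

def φ (t : ℝ) : ℝ := (Real.sqrt (2 * Real.pi))⁻¹ * Real.exp (-(t ^ 2) / 2)

lemma φ_eq : gaussianPDFReal 0 1 = φ := by
  ext t; simp [gaussianPDFReal, φ]

lemma φ_pos (t : ℝ) : 0 < φ t := by rw [← φ_eq]; exact gaussianPDFReal_pos _ _ _ one_ne_zero
lemma φ_nonneg (t : ℝ) : 0 ≤ φ t := (φ_pos t).le
lemma φ_cont : Continuous φ := by unfold φ; continuity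
lemma φ_integrable : Integrable φ := by rw [← φ_eq]; exact integrable_gaussianPDFReal 0 1
lemma φ_integral : ∫ t, φ t = 1 := by rw [← φ_eq]; exact integral_gaussianPDFReal_eq_one 0 one_ne_zero

lemma φ_hasDeriv (t : ℝ) : HasDerivAt φ (-t * φ t) t := by
  have h1 : HasDerivAt (fun x : ℝ => -(x ^ 2) / 2) (-(2 * t ^ 1) / 2) t :=
    ((hasDerivAt_pow 2 t).neg).div_const 2
  have h2 := (h1.exp).const_mul ((Real.sqrt (2 * Real.pi))⁻¹)
  refine h2.congr_deriv ?_
  simp [φ]; ring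

lemma integrable_mul_φ : Integrable (fun t => t * φ t) := by
  have h := (integrable_mul_exp_neg_mul_sq (b := (1/2 : ℝ)) (by norm_num)).const_mul
    ((Real.sqrt (2 * Real.pi))⁻¹)
  refine h.congr ?_
  filter_upwards with t
  unfold φ; ring_nf

lemma integrable_sq_φ : Integrable (fun t => t ^ 2 * φ t) := by
  have h := (integrable_rpow_mul_exp_neg_mul_sq (b := (1/2 : ℝ)) (by norm_num)
    (s := 2) (by norm_num)).const_mul ((Real.sqrt (2 * Real.pi))⁻¹)
  refine h.congr ?_
  filter_upwards with t
  rw [show ((2:ℝ) = ((2:ℕ):ℝ)) by norm_num, Real.rpow_natCast]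
  unfold φ; ring_nf

lemma integral_sq_φ : ∫ t, t ^ 2 * φ t = 1 := by
  have hderiv : ∀ t : ℝ, HasDerivAt (fun t => t * φ t) (φ t - t ^ 2 * φ t) t := by
    intro t
    have := (hasDerivAt_id t).mul (φ_hasDeriv t)
    simp only [id_eq, one_mul] at this
    refine this.congr_deriv ?_; ring
  have hint : Integrable (fun t => φ t - t ^ 2 * φ t) := φ_integrable.sub integrable_sq_φ
  have h0 := integral_eq_zero_of_hasDerivAt_of_integrable hderiv hint integrable_mul_φ
  rw [integral_sub φ_integrable integrable_sq_φ, φ_integral] at h0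
  linarith


lemma gaussianPDF_eq2 : gaussianPDF 0 1
    = fun x => ((Real.toNNReal (gaussianPDFReal 0 1 x) : ℝ≥0) : ℝ≥0∞) := rfl

lemma integral_gauss (f : ℝ → ℝ) :
    ∫ t, f t ∂(gaussianReal 0 1) = ∫ t, φ t * f t := by
  rw [gaussianReal_of_var_ne_zero 0 one_ne_zero, gaussianPDF_eq2,
    integral_withDensity_eq_integral_smul
      ((measurable_gaussianPDFReal 0 1).real_toNNReal) f]
  congr 1; funext t
  rw [NNReal.smul_def, Real.coe_toNNReal _ (gaussianPDFReal_nonneg 0 1 t), φ_eq, smul_eq_mul]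

lemma integrable_gauss_iff (f : ℝ → ℝ) :
    Integrable f (gaussianReal 0 1) ↔ Integrable (fun t => φ t * f t) := by
  rw [gaussianReal_of_var_ne_zero 0 one_ne_zero, gaussianPDF_eq2,
    integrable_withDensity_iff_integrable_smul
      ((measurable_gaussianPDFReal 0 1).real_toNNReal)]
  have he : ∀ t, (Real.toNNReal (gaussianPDFReal 0 1 t) : ℝ≥0) • f t = φ t * f t := by
    intro t
    rw [NNReal.smul_def, Real.coe_toNNReal _ (gaussianPDFReal_nonneg 0 1 t), φ_eq, smul_eq_mul]
  constructor <;> intro h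
  · exact h.congr (Filter.Eventually.of_forall he)
  · exact h.congr (Filter.Eventually.of_forall fun t => (he t).symm)

lemma integral_sq_gauss : ∫ t, t ^ 2 ∂(gaussianReal 0 1) = 1 := by
  rw [integral_gauss]
  rw [show (fun t : ℝ => φ t * t ^ 2) = fun t => t ^ 2 * φ t from funext fun t => mul_comm _ _]
  exact integral_sq_φ

lemma integrable_sq_gauss : Integrable (fun t : ℝ => t ^ 2) (gaussianReal 0 1) := by
  rw [integrable_gauss_iff]
  exact integrable_sq_φ.congr (by filter_upwards with t using mul_comm _ _)

lemma integrable_bdd_mul_φ {f : ℝ → ℝ} (hf : Continuous f) {C : ℝ} (h : ∀ t, |f t| ≤ C) :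
    Integrable (fun t => f t * φ t) := by
  apply Integrable.mono' (φ_integrable.const_mul C) ((hf.mul φ_cont).aestronglyMeasurable)
  filter_upwards with t
  rw [Pi.mul_apply, norm_mul, Real.norm_eq_abs, Real.norm_eq_abs, abs_of_nonneg (φ_nonneg t)]
  exact mul_le_mul_of_nonneg_right (h t) (φ_nonneg t)

lemma integrable_of_bdd {α : Type*} [MeasurableSpace α] {μ : Measure α} [IsFiniteMeasure μ]
    {f : α → ℝ} (hf : AEStronglyMeasurable f μ) {C : ℝ} (h : ∀ x, |f x| ≤ C) :
    Integrable f μ :=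
  Integrable.mono' (integrable_const C) hf
    (Filter.Eventually.of_forall (fun x => by simpa [Real.norm_eq_abs] using h x))

-- bounds
lemma bound_g {Q : ℝ} (hQ : 0 < Q) (c t : ℝ) :
    |(c - t) / ((c - t) ^ 2 + Q)| ≤ (2 * Real.sqrt Q)⁻¹ := by
  have hv : (0:ℝ) < (c - t) ^ 2 + Q := by positivity
  have hs : (0:ℝ) < 2 * Real.sqrt Q := by positivity
  rw [abs_div, abs_of_pos hv, div_le_iff₀ hv]
  have h2 : 2 * Real.sqrt Q * |c - t| ≤ (c - t) ^ 2 + Q := by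
    nlinarith [sq_nonneg (|c - t| - Real.sqrt Q), Real.sq_sqrt hQ.le, sq_abs (c - t)]
  calc |c - t| = (2 * Real.sqrt Q)⁻¹ * (2 * Real.sqrt Q * |c - t|) := by
        field_simp
    _ ≤ (2 * Real.sqrt Q)⁻¹ * ((c - t) ^ 2 + Q) := by
        exact mul_le_mul_of_nonneg_left h2 (inv_nonneg.mpr hs.le)
    _ = (2 * Real.sqrt Q)⁻¹ * ((c - t) ^ 2 + Q) := rfl

lemma bound_tg {BB Q : ℝ} (hB : 0 < BB) (hQ : BB ≤ Q) (c t : ℝ) :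
    |t * (c - t) / ((c - t) ^ 2 + Q)| ≤ 1 + |c| * (2 * Real.sqrt BB)⁻¹ := by
  have hQ0 : (0:ℝ) < Q := lt_of_lt_of_le hB hQ
  have hv : (0:ℝ) < (c - t) ^ 2 + Q := by positivity
  have hs : (0:ℝ) < 2 * Real.sqrt BB := by positivity
  set a := c - t with ha
  have h2 : 2 * Real.sqrt BB * |a| ≤ a ^ 2 + Q := by
    nlinarith [sq_nonneg (|a| - Real.sqrt BB), Real.sq_sqrt hB.le, sq_abs a]
  have h3 : |a| ≤ (2 * Real.sqrt BB)⁻¹ * (a ^ 2 + Q) := by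
    have := mul_le_mul_of_nonneg_left h2 (inv_nonneg.mpr hs.le)
    rwa [← mul_assoc, inv_mul_cancel₀ hs.ne', one_mul] at this
  have h4 : |t * a| ≤ a ^ 2 + |c| * |a| := by
    have ht : t * a = c * a - a * a := by rw [ha]; ring
    rw [ht]
    calc |c * a - a * a| ≤ |c * a| + |a * a| := abs_sub _ _
      _ = |c| * |a| + a ^ 2 := by rw [abs_mul, abs_mul_self]; ring
      _ = a ^ 2 + |c| * |a| := by ring
  rw [abs_div, abs_of_pos hv, div_le_iff₀ hv]
  have h5 : |c| * |a| ≤ |c| * ((2 * Real.sqrt BB)⁻¹ * (a ^ 2 + Q)) :=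
    mul_le_mul_of_nonneg_left h3 (abs_nonneg c)
  calc |t * a| ≤ a ^ 2 + |c| * |a| := h4
    _ ≤ (a ^ 2 + Q) + |c| * ((2 * Real.sqrt BB)⁻¹ * (a ^ 2 + Q)) :=
        add_le_add (by linarith) h5
    _ = (1 + |c| * (2 * Real.sqrt BB)⁻¹) * (a ^ 2 + Q) := by ring

lemma bound_e2 {BB Q : ℝ} (hB : 0 < BB) (hQ : BB ≤ Q) (c t : ℝ) :
    |(-1) / ((c - t) ^ 2 + Q) + 2 * (c - t) ^ 2 / ((c - t) ^ 2 + Q) ^ 2| ≤ 3 / BB := by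
  have hQ0 : (0:ℝ) < Q := lt_of_lt_of_le hB hQ
  have hv : (0:ℝ) < (c - t) ^ 2 + Q := by positivity
  set a := c - t with ha
  have h1 : |(-1) / (a ^ 2 + Q)| ≤ 1 / BB := by
    rw [abs_div, abs_neg, abs_one, abs_of_pos hv, div_le_div_iff₀ hv hB]
    nlinarith
  have h2 : |2 * a ^ 2 / (a ^ 2 + Q) ^ 2| ≤ 2 / BB := by
    rw [abs_div, abs_of_nonneg (by positivity : (0:ℝ) ≤ 2 * a ^ 2),
      abs_of_pos (by positivity : (0:ℝ) < (a ^ 2 + Q) ^ 2), div_le_div_iff₀ (by positivity) hB]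
    nlinarith [sq_nonneg a, mul_le_mul (le_add_of_nonneg_right hQ0.le : a ^ 2 ≤ a ^ 2 + Q) hQ hB.le (by positivity : (0:ℝ) ≤ a ^ 2 + Q)]
  calc |(-1) / (a ^ 2 + Q) + 2 * a ^ 2 / (a ^ 2 + Q) ^ 2|
      ≤ |(-1) / (a ^ 2 + Q)| + |2 * a ^ 2 / (a ^ 2 + Q) ^ 2| := abs_add_le _ _
    _ ≤ 1 / BB + 2 / BB := add_le_add h1 h2
    _ = 3 / BB := by ring

lemma stein_volume (c Q : ℝ) (hQ : 0 < Q) :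
    ∫ t, (t * (c - t) / ((c - t) ^ 2 + Q)) * φ t
      = ∫ t, ((-1) / ((c - t) ^ 2 + Q) + 2 * (c - t) ^ 2 / ((c - t) ^ 2 + Q) ^ 2) * φ t := by
  have hv : ∀ t : ℝ, (0:ℝ) < (c - t) ^ 2 + Q := fun t => by positivity
  have hg : ∀ t : ℝ, HasDerivAt (fun t => (c - t) / ((c - t) ^ 2 + Q))
      ((-1) / ((c - t) ^ 2 + Q) + 2 * (c - t) ^ 2 / ((c - t) ^ 2 + Q) ^ 2) t := by
    intro t
    have hu : HasDerivAt (fun t : ℝ => c - t) (-1) t := (hasDerivAt_id t).const_sub c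
    have hw : HasDerivAt (fun t : ℝ => (c - t) ^ 2 + Q) (2 * (c - t) ^ 1 * (-1)) t :=
      (hu.pow 2).add_const Q
    have := hu.div hw (hv t).ne'
    refine this.congr_deriv ?_
    field_simp
    ring
  have hh : ∀ t : ℝ, HasDerivAt (fun t => ((c - t) / ((c - t) ^ 2 + Q)) * φ t)
      ((((-1) / ((c - t) ^ 2 + Q) + 2 * (c - t) ^ 2 / ((c - t) ^ 2 + Q) ^ 2) * φ t)
        - (t * (c - t) / ((c - t) ^ 2 + Q)) * φ t) t := by
    intro t
    have := (hg t).mul (φ_hasDeriv t)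
    refine this.congr_deriv ?_
    ring
  have contv : Continuous fun t : ℝ => (c - t) ^ 2 + Q := by continuity
  have contg : Continuous fun t : ℝ => (c - t) / ((c - t) ^ 2 + Q) :=
    (continuous_const.sub continuous_id).div contv fun t => (hv t).ne'
  have conttg : Continuous fun t : ℝ => t * (c - t) / ((c - t) ^ 2 + Q) :=
    (continuous_id.mul (continuous_const.sub continuous_id)).div contv fun t => (hv t).ne'
  have cont1 : Continuous fun t : ℝ =>
      (-1) / ((c - t) ^ 2 + Q) + 2 * (c - t) ^ 2 / ((c - t) ^ 2 + Q) ^ 2 :=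
    ((continuous_const.div contv fun t => (hv t).ne').add
      ((continuous_const.mul ((continuous_const.sub continuous_id).pow 2)).div (contv.pow 2)
        fun t => pow_ne_zero 2 (hv t).ne'))
  have int1 : Integrable (fun t =>
      ((-1) / ((c - t) ^ 2 + Q) + 2 * (c - t) ^ 2 / ((c - t) ^ 2 + Q) ^ 2) * φ t) :=
    integrable_bdd_mul_φ cont1 (fun t => bound_e2 hQ le_rfl c t)
  have int2 : Integrable (fun t => (t * (c - t) / ((c - t) ^ 2 + Q)) * φ t) :=
    integrable_bdd_mul_φ conttg (fun t => bound_tg hQ le_rfl c t)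
  have inth : Integrable (fun t => ((c - t) / ((c - t) ^ 2 + Q)) * φ t) :=
    integrable_bdd_mul_φ contg (fun t => bound_g hQ c t)
  have h0 := integral_eq_zero_of_hasDerivAt_of_integrable hh (int1.sub int2) inth
  rw [integral_sub int1 int2] at h0
  linarith

lemma stein_gauss {Q : ℝ} (hQ : 0 < Q) (c : ℝ) :
    ∫ t, t * (c - t) / ((c - t) ^ 2 + Q) ∂(gaussianReal 0 1)
      = ∫ t, ((-1) / ((c - t) ^ 2 + Q) + 2 * (c - t) ^ 2 / ((c - t) ^ 2 + Q) ^ 2)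
          ∂(gaussianReal 0 1) := by
  rw [integral_gauss, integral_gauss,
    show (fun t => φ t * (t * (c - t) / ((c - t) ^ 2 + Q)))
      = fun t => (t * (c - t) / ((c - t) ^ 2 + Q)) * φ t from funext fun t => mul_comm _ _,
    show (fun t => φ t * ((-1) / ((c - t) ^ 2 + Q) + 2 * (c - t) ^ 2 / ((c - t) ^ 2 + Q) ^ 2))
      = fun t => ((-1) / ((c - t) ^ 2 + Q) + 2 * (c - t) ^ 2 / ((c - t) ^ 2 + Q) ^ 2) * φ t
      from funext fun t => mul_comm _ _]
  exact stein_volume c Q hQ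

-- primed bound lemmas, with general denominator
lemma bound_tg' {BB v : ℝ} (hB : 0 < BB) (c t : ℝ) (hv : (c - t) ^ 2 + BB ≤ v) :
    |t * (c - t) / v| ≤ 1 + |c| * (2 * Real.sqrt BB)⁻¹ := by
  have h : v = (c - t) ^ 2 + (v - (c - t) ^ 2) := by ring
  rw [h]
  exact bound_tg hB (by linarith) c t

lemma bound_e2' {BB v : ℝ} (hB : 0 < BB) (c t : ℝ) (hv : (c - t) ^ 2 + BB ≤ v) :
    |(-1) / v + 2 * (c - t) ^ 2 / v ^ 2| ≤ 3 / BB := by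
  have h : v = (c - t) ^ 2 + (v - (c - t) ^ 2) := by ring
  rw [h]
  exact bound_e2 hB (by linarith) c t

lemma bound_inv {BB v : ℝ} (hB : 0 < BB) (hv : BB ≤ v) : |1 / v| ≤ 1 / BB := by
  have h0 : (0:ℝ) < v := lt_of_lt_of_le hB hv
  rw [abs_div, abs_one, abs_of_pos h0, div_le_div_iff₀ h0 hB]
  nlinarith

lemma bound_sq_div {BB v : ℝ} (hB : 0 < BB) (a : ℝ) (hv : a ^ 2 + BB ≤ v) :
    |a ^ 2 / v ^ 2| ≤ 1 / BB := by
  have h0 : (0:ℝ) < v := by nlinarith [sq_nonneg a]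
  rw [abs_div, abs_of_nonneg (sq_nonneg a), abs_of_pos (by positivity : (0:ℝ) < v ^ 2),
    div_le_div_iff₀ (by positivity) hB]
  nlinarith [sq_nonneg a, mul_le_mul (show a ^ 2 ≤ v by nlinarith) (show BB ≤ v by nlinarith)
    hB.le h0.le]

lemma bound_SB {BB v : ℝ} (hB : 0 < BB) (hv : BB ≤ v) : |(v - BB) / v ^ 2| ≤ 1 / BB := by
  have h0 : (0:ℝ) < v := lt_of_lt_of_le hB hv
  rw [abs_div, abs_of_nonneg (by linarith : (0:ℝ) ≤ v - BB),
    abs_of_pos (by positivity : (0:ℝ) < v ^ 2), div_le_div_iff₀ (by positivity) hB]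
  nlinarith

-- transfer over piFinSuccAbove
lemma key_transfer {n : ℕ} (i : Fin (n+1)) (F : (Fin (n+1) → ℝ) → ℝ) :
    ∫ x, F x ∂(Measure.pi fun _ : Fin (n+1) => gaussianReal 0 1)
      = ∫ z, F (i.insertNth z.1 z.2)
          ∂((gaussianReal 0 1).prod (Measure.pi fun _ : Fin n => gaussianReal 0 1)) := by
  have MP := measurePreserving_piFinSuccAbove (fun _ : Fin (n+1) => gaussianReal 0 1) i
  have h := MP.integral_comp
    (MeasurableEquiv.piFinSuccAbove (fun _ : Fin (n+1) => ℝ) i).measurableEmbedding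
    (fun z : ℝ × (Fin n → ℝ) => F (i.insertNth z.1 z.2))
  rw [← h]
  congr 1; funext x
  simp [Fin.insertNth_self_removeNth]

lemma integrable_fst_sq {n : ℕ} :
    Integrable (fun z : ℝ × (Fin n → ℝ) => z.1 ^ 2)
      ((gaussianReal 0 1).prod (Measure.pi fun _ : Fin n => gaussianReal 0 1)) := by
  have := integrable_sq_gauss.mul_prod (g := fun _ : Fin n → ℝ => (1:ℝ))
    (integrable_const 1) (ν := Measure.pi fun _ : Fin n => gaussianReal 0 1)
  exact this.congr (Filter.Eventually.of_forall fun z => by simp)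

lemma integrable_coord_sq {n : ℕ} (i : Fin (n+1)) :
    Integrable (fun x : Fin (n+1) → ℝ => (x i) ^ 2)
      (Measure.pi fun _ => gaussianReal 0 1) := by
  have MP := measurePreserving_piFinSuccAbove (fun _ : Fin (n+1) => gaussianReal 0 1) i
  have hG := integrable_fst_sq (n := n)
  have := (MP.integrable_comp hG.aestronglyMeasurable).mpr hG
  exact this.congr (Filter.Eventually.of_forall fun x => rfl)

lemma integral_coord_sq {n : ℕ} (i : Fin (n+1)) :
    ∫ x : Fin (n+1) → ℝ, (x i) ^ 2 ∂(Measure.pi fun _ => gaussianReal 0 1) = 1 := by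
  rw [key_transfer i]
  have h1 : ∀ z : ℝ × (Fin n → ℝ), (i.insertNth z.1 z.2 : Fin (n+1) → ℝ) i ^ 2
      = z.1 ^ 2 := by intro z; simp
  rw [integral_congr_ae (Filter.Eventually.of_forall h1),
    integral_prod_symm _ integrable_fst_sq]
  simp [integral_sq_gauss]

lemma bound_B2 {BB v : ℝ} (hB : 0 < BB) (hv : BB ≤ v) : |BB / v ^ 2| ≤ 1 / BB := by
  have h0 : (0:ℝ) < v := lt_of_lt_of_le hB hv
  rw [abs_div, abs_of_pos hB, abs_of_pos (by positivity : (0:ℝ) < v ^ 2),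
    div_le_div_iff₀ (by positivity) hB]
  nlinarith

lemma coord_stein {n : ℕ} (bb : Fin (n+1) → ℝ) {B : ℝ} (hB : 0 < B) (i : Fin (n+1)) :
    ∫ x : Fin (n+1) → ℝ, x i * (bb i - x i) / ((∑ j, (bb j - x j) ^ 2) + B)
        ∂(Measure.pi fun _ => gaussianReal 0 1)
      = ∫ x : Fin (n+1) → ℝ, ((-1) / ((∑ j, (bb j - x j) ^ 2) + B)
          + 2 * (bb i - x i) ^ 2 / ((∑ j, (bb j - x j) ^ 2) + B) ^ 2)
        ∂(Measure.pi fun _ => gaussianReal 0 1) := by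
  set Q : (Fin n → ℝ) → ℝ := fun y => (∑ j, (bb (i.succAbove j) - y j) ^ 2) + B with hQdef
  have hQB : ∀ y, B ≤ Q y := fun y =>
    le_add_of_nonneg_left (Finset.sum_nonneg fun j _ => sq_nonneg _)
  have hQ0 : ∀ y, (0:ℝ) < Q y := fun y => lt_of_lt_of_le hB (hQB y)
  have hS : ∀ (z : ℝ × (Fin n → ℝ)),
      (∑ j, (bb j - (i.insertNth z.1 z.2 : Fin (n+1) → ℝ) j) ^ 2) + B
        = (bb i - z.1) ^ 2 + Q z.2 := by
    intro z
    rw [Fin.sum_univ_succAbove (fun j => (bb j - (i.insertNth z.1 z.2 : Fin (n+1) → ℝ) j) ^ 2) i]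
    simp only [Fin.insertNth_apply_same, Fin.insertNth_apply_succAbove, hQdef]
    ring
  rw [key_transfer i, key_transfer i]
  have e1 : ∀ z : ℝ × (Fin n → ℝ),
      (i.insertNth z.1 z.2 : Fin (n+1) → ℝ) i * (bb i - (i.insertNth z.1 z.2 : Fin (n+1) → ℝ) i)
          / ((∑ j, (bb j - (i.insertNth z.1 z.2 : Fin (n+1) → ℝ) j) ^ 2) + B)
        = z.1 * (bb i - z.1) / ((bb i - z.1) ^ 2 + Q z.2) := by
    intro z; rw [hS]; simp
  have e2 : ∀ z : ℝ × (Fin n → ℝ),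
      ((-1) / ((∑ j, (bb j - (i.insertNth z.1 z.2 : Fin (n+1) → ℝ) j) ^ 2) + B)
          + 2 * (bb i - (i.insertNth z.1 z.2 : Fin (n+1) → ℝ) i) ^ 2
            / ((∑ j, (bb j - (i.insertNth z.1 z.2 : Fin (n+1) → ℝ) j) ^ 2) + B) ^ 2)
        = (-1) / ((bb i - z.1) ^ 2 + Q z.2)
            + 2 * (bb i - z.1) ^ 2 / ((bb i - z.1) ^ 2 + Q z.2) ^ 2 := by
    intro z; rw [hS]; simp
  rw [integral_congr_ae (Filter.Eventually.of_forall e1),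
      integral_congr_ae (Filter.Eventually.of_forall e2)]
  have contQ : Continuous Q := by
    apply Continuous.add ?_ continuous_const
    exact continuous_finset_sum _ fun j _ => ((continuous_const.sub (continuous_apply j)).pow 2)
  have hv : ∀ z : ℝ × (Fin n → ℝ), (0:ℝ) < (bb i - z.1) ^ 2 + Q z.2 := fun z => by
    have := hQ0 z.2; positivity
  have contv : Continuous fun z : ℝ × (Fin n → ℝ) => (bb i - z.1) ^ 2 + Q z.2 :=
    (((continuous_const.sub continuous_fst).pow 2).add (contQ.comp continuous_snd))
  have cont1 : Continuous fun z : ℝ × (Fin n → ℝ) =>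
      z.1 * (bb i - z.1) / ((bb i - z.1) ^ 2 + Q z.2) :=
    (continuous_fst.mul (continuous_const.sub continuous_fst)).div contv fun z => (hv z).ne'
  have cont2 : Continuous fun z : ℝ × (Fin n → ℝ) =>
      (-1) / ((bb i - z.1) ^ 2 + Q z.2) + 2 * (bb i - z.1) ^ 2 / ((bb i - z.1) ^ 2 + Q z.2) ^ 2 :=
    (continuous_const.div contv fun z => (hv z).ne').add
      ((continuous_const.mul ((continuous_const.sub continuous_fst).pow 2)).div (contv.pow 2)
        fun z => pow_ne_zero 2 (hv z).ne')
  have int1 : Integrable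
      (fun z : ℝ × (Fin n → ℝ) => z.1 * (bb i - z.1) / ((bb i - z.1) ^ 2 + Q z.2))
      ((gaussianReal 0 1).prod (Measure.pi fun _ : Fin n => gaussianReal 0 1)) :=
    integrable_of_bdd cont1.aestronglyMeasurable (fun z => bound_tg hB (hQB z.2) (bb i) z.1)
  have int2 : Integrable (fun z : ℝ × (Fin n → ℝ) =>
      (-1) / ((bb i - z.1) ^ 2 + Q z.2) + 2 * (bb i - z.1) ^ 2 / ((bb i - z.1) ^ 2 + Q z.2) ^ 2)
      ((gaussianReal 0 1).prod (Measure.pi fun _ : Fin n => gaussianReal 0 1)) :=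
    integrable_of_bdd cont2.aestronglyMeasurable (fun z => bound_e2 hB (hQB z.2) (bb i) z.1)
  rw [integral_prod_symm _ int1, integral_prod_symm _ int2]
  refine integral_congr_ae (Filter.Eventually.of_forall fun y => ?_)
  simpa using stein_gauss (hQ0 y) (bb i)

end S14

end

open S14

/-- For `η ~ N(0, I_d)`, `b ∈ ℝᵈ`, `A, B > 0` and
`Z = η + A(b−η)/(‖b−η‖² + B)`, we have
`E‖Z‖² < d + E[A(A + 4 − 2d)/(‖b−η‖² + B)]`. -/
theorem stmt14 {d : ℕ} (hd : 1 ≤ d) (b : Fin d → ℝ) (A B : ℝ)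
    (hA : 0 < A) (hB : 0 < B) :
    (∫ x : Fin d → ℝ,
        ∑ i, (x i + A * (b i - x i) / ((∑ j, (b j - x j)^2) + B))^2
      ∂(Measure.pi fun _ : Fin d => gaussianReal 0 1))
    < d + ∫ x : Fin d → ℝ,
        A * (A + 4 - 2 * d) / ((∑ j, (b j - x j)^2) + B)
      ∂(Measure.pi fun _ : Fin d => gaussianReal 0 1) := by
  obtain ⟨n, rfl⟩ : ∃ n, d = n + 1 := ⟨d - 1, (Nat.succ_pred_eq_of_pos hd).symm⟩
  have hSB : ∀ x : Fin (n+1) → ℝ, B ≤ (∑ j, (b j - x j) ^ 2) + B := fun x =>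
    le_add_of_nonneg_left (Finset.sum_nonneg fun j _ => sq_nonneg _)
  have hSpos : ∀ x : Fin (n+1) → ℝ, (0:ℝ) < (∑ j, (b j - x j) ^ 2) + B := fun x =>
    lt_of_lt_of_le hB (hSB x)
  have hsingle : ∀ (x : Fin (n+1) → ℝ) (i : Fin (n+1)),
      (b i - x i) ^ 2 + B ≤ (∑ j, (b j - x j) ^ 2) + B := fun x i =>
    add_le_add_left (Finset.single_le_sum (fun j _ => sq_nonneg (b j - x j))
      (Finset.mem_univ i)) B
  have contS : Continuous fun x : Fin (n+1) → ℝ => (∑ j, (b j - x j) ^ 2) + B := by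
    apply Continuous.add ?_ continuous_const
    exact continuous_finset_sum _ fun j _ => ((continuous_const.sub (continuous_apply j)).pow 2)
  -- integrable pieces
  have iInv : Integrable (fun x : Fin (n+1) → ℝ => 1 / ((∑ j, (b j - x j) ^ 2) + B))
      (Measure.pi fun _ => gaussianReal 0 1) :=
    integrable_of_bdd ((continuous_const.div contS fun x => (hSpos x).ne').aestronglyMeasurable)
      (fun x => bound_inv hB (hSB x))
  have iTG : ∀ i : Fin (n+1), Integrable
      (fun x : Fin (n+1) → ℝ => x i * (b i - x i) / ((∑ j, (b j - x j) ^ 2) + B))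
      (Measure.pi fun _ => gaussianReal 0 1) := fun i =>
    integrable_of_bdd ((((continuous_apply i).mul
        (continuous_const.sub (continuous_apply i))).div contS
        fun x => (hSpos x).ne').aestronglyMeasurable)
      (fun x => bound_tg' hB (b i) (x i) (hsingle x i))
  have iA : ∀ i : Fin (n+1), Integrable
      (fun x : Fin (n+1) → ℝ => (b i - x i) ^ 2 / ((∑ j, (b j - x j) ^ 2) + B) ^ 2)
      (Measure.pi fun _ => gaussianReal 0 1) := fun i =>
    integrable_of_bdd ((((continuous_const.sub (continuous_apply i)).pow 2).div (contS.pow 2)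
        fun x => pow_ne_zero 2 (hSpos x).ne').aestronglyMeasurable)
      (fun x => bound_sq_div hB (b i - x i) (hsingle x i))
  have iJ2 : Integrable
      (fun x : Fin (n+1) → ℝ => ((∑ j, (b j - x j) ^ 2) + B - B) / ((∑ j, (b j - x j) ^ 2) + B) ^ 2)
      (Measure.pi fun _ => gaussianReal 0 1) :=
    integrable_of_bdd (((contS.sub continuous_const).div (contS.pow 2)
        fun x => pow_ne_zero 2 (hSpos x).ne').aestronglyMeasurable)
      (fun x => bound_SB hB (hSB x))
  have iB2 : Integrable
      (fun x : Fin (n+1) → ℝ => B / ((∑ j, (b j - x j) ^ 2) + B) ^ 2)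
      (Measure.pi fun _ => gaussianReal 0 1) :=
    integrable_of_bdd ((continuous_const.div (contS.pow 2)
        fun x => pow_ne_zero 2 (hSpos x).ne').aestronglyMeasurable)
      (fun x => bound_B2 hB (hSB x))
  set J1 : ℝ := ∫ x : Fin (n+1) → ℝ, 1 / ((∑ j, (b j - x j) ^ 2) + B)
      ∂(Measure.pi fun _ => gaussianReal 0 1) with hJ1def
  set J2 : ℝ := ∫ x : Fin (n+1) → ℝ,
      ((∑ j, (b j - x j) ^ 2) + B - B) / ((∑ j, (b j - x j) ^ 2) + B) ^ 2
      ∂(Measure.pi fun _ => gaussianReal 0 1) with hJ2def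
  set K : Fin (n+1) → ℝ := fun i => ∫ x : Fin (n+1) → ℝ,
      (b i - x i) ^ 2 / ((∑ j, (b j - x j) ^ 2) + B) ^ 2
      ∂(Measure.pi fun _ => gaussianReal 0 1) with hKdef
  -- Stein per coordinate
  have hTG : ∀ i : Fin (n+1),
      ∫ x : Fin (n+1) → ℝ, x i * (b i - x i) / ((∑ j, (b j - x j) ^ 2) + B)
        ∂(Measure.pi fun _ => gaussianReal 0 1) = -J1 + 2 * K i := by
    intro i
    rw [coord_stein b hB i]
    have e : ∀ x : Fin (n+1) → ℝ,
        (-1) / ((∑ j, (b j - x j) ^ 2) + B)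
            + 2 * (b i - x i) ^ 2 / ((∑ j, (b j - x j) ^ 2) + B) ^ 2
          = (-1) * (1 / ((∑ j, (b j - x j) ^ 2) + B))
            + 2 * ((b i - x i) ^ 2 / ((∑ j, (b j - x j) ^ 2) + B) ^ 2) := fun x => by ring
    rw [integral_congr_ae (Filter.Eventually.of_forall e),
      integral_add (iInv.const_mul (-1)) ((iA i).const_mul 2),
      integral_const_mul, integral_const_mul, ← hJ1def]
    have hK : K i = ∫ x : Fin (n+1) → ℝ,
        (b i - x i) ^ 2 / ((∑ j, (b j - x j) ^ 2) + B) ^ 2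
        ∂(Measure.pi fun _ => gaussianReal 0 1) := by rw [hKdef]
    rw [← hK]
    ring
  have hsumK : ∑ i, K i = J2 := by
    rw [hKdef, ← integral_finset_sum _ (fun i _ => iA i), hJ2def]
    have e : ∀ x : Fin (n+1) → ℝ,
        (∑ i, (b i - x i) ^ 2 / ((∑ j, (b j - x j) ^ 2) + B) ^ 2)
          = ((∑ j, (b j - x j) ^ 2) + B - B) / ((∑ j, (b j - x j) ^ 2) + B) ^ 2 := by
      intro x
      rw [← Finset.sum_div]
      congr 1
      ring
    exact integral_congr_ae (Filter.Eventually.of_forall e)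
  -- pointwise expansion
  have hpt : ∀ x : Fin (n+1) → ℝ,
      ∑ i, (x i + A * (b i - x i) / ((∑ j, (b j - x j) ^ 2) + B)) ^ 2
        = (∑ i, (x i) ^ 2)
          + ((∑ i, 2 * A * (x i * (b i - x i) / ((∑ j, (b j - x j) ^ 2) + B)))
            + (∑ i, A ^ 2 * ((b i - x i) ^ 2 / ((∑ j, (b j - x j) ^ 2) + B) ^ 2))) := by
    intro x
    rw [← Finset.sum_add_distrib, ← Finset.sum_add_distrib]
    refine Finset.sum_congr rfl fun i _ => ?_
    have h0 := (hSpos x).ne'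
    field_simp
    ring
  -- LHS value
  have hf1 : ∫ x : Fin (n+1) → ℝ, ∑ i, (x i)^2 ∂(Measure.pi fun _ => gaussianReal 0 1)
      = (n:ℝ) + 1 := by
    rw [integral_finset_sum _ (fun i _ => integrable_coord_sq i)]
    simp [integral_coord_sq]
  have hf2 : ∫ x : Fin (n+1) → ℝ,
      ∑ i, 2 * A * (x i * (b i - x i) / ((∑ j, (b j - x j) ^ 2) + B))
        ∂(Measure.pi fun _ => gaussianReal 0 1)
      = 2 * A * (-((n:ℝ)+1) * J1 + 2 * J2) := by
    rw [integral_finset_sum _ (fun i _ => (iTG i).const_mul (2*A))]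
    have : ∀ i : Fin (n+1), (∫ x : Fin (n+1) → ℝ,
        2 * A * (x i * (b i - x i) / ((∑ j, (b j - x j) ^ 2) + B))
          ∂(Measure.pi fun _ => gaussianReal 0 1)) = 2 * A * (-J1 + 2 * K i) := fun i => by
      rw [integral_const_mul, hTG i]
    rw [Finset.sum_congr rfl fun i _ => this i, ← Finset.mul_sum, Finset.sum_add_distrib,
      Finset.sum_const, Finset.card_univ, Fintype.card_fin, nsmul_eq_mul, ← Finset.mul_sum,
      hsumK]
    push_cast
    ring
  have hf3 : ∫ x : Fin (n+1) → ℝ,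
      ∑ i, A ^ 2 * ((b i - x i) ^ 2 / ((∑ j, (b j - x j) ^ 2) + B) ^ 2)
        ∂(Measure.pi fun _ => gaussianReal 0 1)
      = A ^ 2 * J2 := by
    rw [integral_finset_sum _ (fun i _ => (iA i).const_mul (A^2))]
    have : ∀ i : Fin (n+1), (∫ x : Fin (n+1) → ℝ,
        A ^ 2 * ((b i - x i) ^ 2 / ((∑ j, (b j - x j) ^ 2) + B) ^ 2)
          ∂(Measure.pi fun _ => gaussianReal 0 1)) = A ^ 2 * K i := fun i => by
      rw [integral_const_mul, hKdef]
    rw [Finset.sum_congr rfl fun i _ => this i, ← Finset.mul_sum, hsumK]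
  have if1 : Integrable (fun x : Fin (n+1) → ℝ => ∑ i, (x i)^2)
      (Measure.pi fun _ => gaussianReal 0 1) :=
    integrable_finset_sum _ (fun i _ => integrable_coord_sq i)
  have if2 : Integrable (fun x : Fin (n+1) → ℝ =>
      ∑ i, 2 * A * (x i * (b i - x i) / ((∑ j, (b j - x j) ^ 2) + B)))
      (Measure.pi fun _ => gaussianReal 0 1) :=
    integrable_finset_sum _ (fun i _ => (iTG i).const_mul (2*A))
  have if3 : Integrable (fun x : Fin (n+1) → ℝ =>
      ∑ i, A ^ 2 * ((b i - x i) ^ 2 / ((∑ j, (b j - x j) ^ 2) + B) ^ 2))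
      (Measure.pi fun _ => gaussianReal 0 1) :=
    integrable_finset_sum _ (fun i _ => (iA i).const_mul (A^2))
  have hLHS : (∫ x : Fin (n+1) → ℝ,
      ∑ i, (x i + A * (b i - x i) / ((∑ j, (b j - x j)^2) + B))^2
        ∂(Measure.pi fun _ => gaussianReal 0 1))
      = ((n:ℝ) + 1) + (2 * A * (-((n:ℝ)+1) * J1 + 2 * J2) + A ^ 2 * J2) := by
    have if23 : Integrable (fun x : Fin (n+1) → ℝ =>
        (∑ i, 2 * A * (x i * (b i - x i) / ((∑ j, (b j - x j) ^ 2) + B)))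
          + (∑ i, A ^ 2 * ((b i - x i) ^ 2 / ((∑ j, (b j - x j) ^ 2) + B) ^ 2)))
        (Measure.pi fun _ => gaussianReal 0 1) := if2.add if3
    rw [integral_congr_ae (Filter.Eventually.of_forall hpt),
      integral_add if1 if23, integral_add if2 if3, hf1, hf2, hf3]
  -- RHS value
  have hRHS : (∫ x : Fin (n+1) → ℝ,
      A * (A + 4 - 2 * ((n:ℝ)+1)) / ((∑ j, (b j - x j)^2) + B)
        ∂(Measure.pi fun _ => gaussianReal 0 1))
      = A * (A + 4 - 2 * ((n:ℝ)+1)) * J1 := by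
    have e : ∀ x : Fin (n+1) → ℝ,
        A * (A + 4 - 2 * ((n:ℝ)+1)) / ((∑ j, (b j - x j)^2) + B)
          = (A * (A + 4 - 2 * ((n:ℝ)+1))) * (1 / ((∑ j, (b j - x j)^2) + B)) := fun x => by
      ring
    rw [integral_congr_ae (Filter.Eventually.of_forall e), integral_const_mul, hJ1def]
  -- positivity of ∫ B/S^2
  have hBpos : 0 < ∫ x : Fin (n+1) → ℝ, B / ((∑ j, (b j - x j) ^ 2) + B) ^ 2
      ∂(Measure.pi fun _ => gaussianReal 0 1) := by
    rw [integral_pos_iff_support_of_nonneg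
      (fun x => div_nonneg hB.le (sq_nonneg _)) iB2]
    have hsupp : Function.support (fun x : Fin (n+1) → ℝ =>
        B / ((∑ j, (b j - x j) ^ 2) + B) ^ 2) = Set.univ :=
      Set.eq_univ_iff_forall.mpr fun x =>
        (div_pos hB (pow_pos (hSpos x) 2)).ne'
    rw [hsupp]
    simp
  have hdiff : J1 - J2 = ∫ x : Fin (n+1) → ℝ, B / ((∑ j, (b j - x j) ^ 2) + B) ^ 2
      ∂(Measure.pi fun _ => gaussianReal 0 1) := by
    rw [hJ1def, hJ2def, ← integral_sub iInv iJ2]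
    refine integral_congr_ae (Filter.Eventually.of_forall fun x => ?_)
    have h0 := (hSpos x).ne'
    field_simp
    ring
  have hJ21 : J2 < J1 := by
    have := hBpos
    rw [← hdiff] at this
    linarith
  -- conclude
  have hcast : ((n+1 : ℕ) : ℝ) = (n:ℝ) + 1 := by push_cast; ring
  rw [hLHS]
  rw [show (∫ x : Fin (n+1) → ℝ,
      A * (A + 4 - 2 * ((n+1 : ℕ) : ℝ)) / ((∑ j, (b j - x j)^2) + B)
        ∂(Measure.pi fun _ => gaussianReal 0 1))
      = A * (A + 4 - 2 * ((n:ℝ)+1)) * J1 from by rw [← hRHS]; norm_num]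
  rw [hcast]
  nlinarith [mul_pos (by positivity : (0:ℝ) < 4 * A + A ^ 2) (by linarith : (0:ℝ) < J1 - J2)]
end

section
/- Let Q ~ χ²_{(m)} with integer m ≥ 1, and let C > 1, D > 0. Then E[ Q(C − Q/m)/(Q + D) ] ≥ ((C−1)m − 2)/(m + 2 + D). In particular this expectation is positive whenever C > 1 + 2/m. -/
open MeasureTheory ProbabilityTheory
open scoped ENNReal NNReal

set_option maxHeartbeats 1000000

lemma gpdf_of_neg' {a r x : ℝ} (hx : x < 0) : gammaPDFReal a r x = 0 := by
  simp [gammaPDFReal, not_le.mpr hx]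

lemma gpdf_zero' {a r : ℝ} (ha : 1 < a) : gammaPDFReal a r 0 = 0 := by
  simp [gammaPDFReal, Real.zero_rpow (by linarith : a - 1 ≠ 0)]

lemma gpdf_id' {a r : ℝ} (ha : 0 < a) (hr : 0 < r) (x : ℝ) :
    x * gammaPDFReal a r x = (a / r) * gammaPDFReal (a + 1) r x := by
  rcases lt_trichotomy x 0 with hx | rfl | hx
  · simp [gpdf_of_neg' hx]
  · simp [gpdf_zero' (by linarith : (1:ℝ) < a + 1)]
  · simp only [gammaPDFReal, if_pos hx.le]
    have h1 : Real.Gamma (a + 1) = a * Real.Gamma a := Real.Gamma_add_one ha.ne'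
    have h2 : r ^ (a + 1) = r ^ a * r := Real.rpow_add_one hr.ne' a
    have h3 : x ^ (a + 1 - 1) = x ^ (a - 1) * x := by
      rw [show a + 1 - 1 = (a - 1) + 1 by ring, Real.rpow_add_one hx.ne']
    have hG : Real.Gamma a ≠ 0 := (Real.Gamma_pos_of_pos ha).ne'
    rw [h1, h2, h3]
    field_simp

lemma integrable_gpdf' {a r : ℝ} (ha : 0 < a) (hr : 0 < r) :
    Integrable (gammaPDFReal a r) := by
  refine ⟨(measurable_gammaPDFReal a r).aestronglyMeasurable, ?_⟩
  rw [HasFiniteIntegral]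
  have : ∀ x, ‖gammaPDFReal a r x‖ₑ = gammaPDF a r x := fun x =>
    Real.enorm_eq_ofReal (gammaPDFReal_nonneg ha hr x)
  simp_rw [this, lintegral_gammaPDF_eq_one ha hr]
  exact ENNReal.one_lt_top

lemma integral_gpdf' {a r : ℝ} (ha : 0 < a) (hr : 0 < r) :
    ∫ x, gammaPDFReal a r x = 1 := by
  rw [integral_eq_lintegral_of_nonneg_ae
      (Filter.Eventually.of_forall (gammaPDFReal_nonneg ha hr))
      (measurable_gammaPDFReal a r).aestronglyMeasurable]
  rw [show (fun x => ENNReal.ofReal (gammaPDFReal a r x)) = gammaPDF a r from rfl,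
    lintegral_gammaPDF_eq_one ha hr, ENNReal.toReal_one]

lemma integral_gammaMeasure' {a r : ℝ} (ha : 0 < a) (hr : 0 < r) (g : ℝ → ℝ) :
    ∫ x, g x ∂(gammaMeasure a r) = ∫ x, gammaPDFReal a r x * g x := by
  rw [gammaMeasure,
    show gammaPDF a r = fun x => ((Real.toNNReal (gammaPDFReal a r x) : ℝ≥0) : ℝ≥0∞) from rfl,
    integral_withDensity_eq_integral_smul (measurable_gammaPDFReal a r).real_toNNReal]
  refine integral_congr_ae (Filter.Eventually.of_forall fun x => ?_)
  simp [NNReal.smul_def, Real.coe_toNNReal _ (gammaPDFReal_nonneg ha hr x)]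

/-- For `Q ~ χ²_(m)` (a Gamma(m/2, 1/2) distribution), `C > 1`, `D > 0`:
`E[Q(C − Q/m)/(Q + D)] ≥ ((C−1)m − 2)/(m + 2 + D)`; in particular the
expectation is positive whenever `C > 1 + 2/m`. -/
theorem stmt15 (m : ℕ) (hm : 1 ≤ m) (C D : ℝ) (hC : 1 < C) (hD : 0 < D) :
    (((C - 1) * m - 2) / (m + 2 + D)
      ≤ ∫ x, x * (C - x / m) / (x + D) ∂(gammaMeasure (m / 2 : ℝ) (1 / 2)))
    ∧ (1 + 2 / (m : ℝ) < C →
        0 < ∫ x, x * (C - x / m) / (x + D) ∂(gammaMeasure (m / 2 : ℝ) (1 / 2))) := by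
  have hm0 : (0:ℝ) < m := by exact_mod_cast hm
  have ha : (0:ℝ) < m / 2 := by linarith
  have hr : (0:ℝ) < 1 / 2 := by norm_num
  have ha1 : (0:ℝ) < m / 2 + 1 := by linarith
  set M : ℝ := (m : ℝ) + 2 with hM
  set K : ℝ := m * C + D with hK
  have hMD : (0:ℝ) < M + D := by rw [hM]; linarith
  have hKpos : 0 < K := by rw [hK]; nlinarith
  set β : ℝ := K / (M + D) ^ 2 with hβ
  set α : ℝ := K * (2 * M + D) / (M + D) ^ 2 - 1 with hα
  have hβnn : 0 ≤ β := by rw [hβ]; positivity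
  have hc : β * (M + D) ^ 2 = K := by
    rw [hβ]; field_simp
  have hα2 : α = β * (2 * M + D) - 1 := by rw [hα, hβ]; ring
  -- key pointwise identity lemma for the density factor
  have hid : ∀ x : ℝ, x * gammaPDFReal (m / 2) (1/2) x
      = (m : ℝ) * gammaPDFReal (m / 2 + 1) (1/2) x := by
    intro x
    have := gpdf_id' ha hr x
    rwa [show ((m : ℝ) / 2) / (1/2) = (m : ℝ) by ring] at this
  have hid1 : ∀ x : ℝ, x * gammaPDFReal (m / 2 + 1) (1/2) x
      = M * gammaPDFReal (m / 2 + 1 + 1) (1/2) x := by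
    intro x
    have := gpdf_id' ha1 hr x
    rwa [show ((m : ℝ) / 2 + 1) / (1/2) = M by rw [hM]; ring] at this
  -- Step 1 : rewrite the integral
  have step1 : ∫ x, x * (C - x / m) / (x + D) ∂(gammaMeasure (m / 2 : ℝ) (1 / 2))
      = ∫ x, gammaPDFReal (m / 2 + 1) (1/2) x * ((m * C - x) / (x + D)) := by
    rw [integral_gammaMeasure' ha hr]
    refine integral_congr_ae (Filter.Eventually.of_forall fun x => ?_)
    dsimp only
    have e1 : gammaPDFReal (m / 2) (1/2) x * (x * (C - x / m) / (x + D))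
        = (x * gammaPDFReal (m / 2) (1/2) x) * ((C - x / m) / (x + D)) := by ring
    rw [e1, hid x]
    have e2 : (m : ℝ) * (C - x / m) = m * C - x := by field_simp
    calc (m : ℝ) * gammaPDFReal (m / 2 + 1) (1/2) x * ((C - x / m) / (x + D))
        = gammaPDFReal (m / 2 + 1) (1/2) x * ((m * (C - x / m)) / (x + D)) := by ring
      _ = gammaPDFReal (m / 2 + 1) (1/2) x * ((m * C - x) / (x + D)) := by rw [e2]
  -- pointwise decomposition of the lower function
  have e : ∀ x : ℝ, gammaPDFReal (m / 2 + 1) (1/2) x * (α - β * x)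
      = α * gammaPDFReal (m / 2 + 1) (1/2) x - (β * M) * gammaPDFReal (m / 2 + 1 + 1) (1/2) x := by
    intro x
    have := hid1 x
    calc gammaPDFReal (m / 2 + 1) (1/2) x * (α - β * x)
        = α * gammaPDFReal (m / 2 + 1) (1/2) x - β * (x * gammaPDFReal (m / 2 + 1) (1/2) x) := by
          ring
      _ = _ := by rw [this]; ring
  have ha2 : (0:ℝ) < m / 2 + 1 + 1 := by linarith
  have int_lower : Integrable (fun x => gammaPDFReal (m / 2 + 1) (1/2) x * (α - β * x)) := by
    simp_rw [e]
    exact ((integrable_gpdf' ha1 hr).const_mul α).sub ((integrable_gpdf' ha2 hr).const_mul (β * M))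
  have int_upper : Integrable
      (fun x => gammaPDFReal (m / 2 + 1) (1/2) x * ((m * C - x) / (x + D))) := by
    have hB : (0:ℝ) ≤ m * C / D + 1 := by positivity
    refine ((integrable_gpdf' ha1 hr).const_mul (m * C / D + 1)).mono ?_ ?_
    · exact ((measurable_gammaPDFReal _ _).mul
        ((measurable_const.sub measurable_id).div (measurable_id.add_const D))).aestronglyMeasurable
    · refine Filter.Eventually.of_forall fun x => ?_
      rcases lt_or_ge x 0 with hx | hx
      · simp [gpdf_of_neg' hx]
      · have hpdf := gammaPDFReal_nonneg ha1 hr x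
        have hxD : 0 < x + D := by linarith
        have hdc : m * C / D * D = m * C := by field_simp
        have hb : |(m * C - x) / (x + D)| ≤ m * C / D + 1 := by
          rw [abs_div, abs_of_pos hxD, div_le_iff₀ hxD]
          rw [abs_le]
          constructor <;> nlinarith [mul_nonneg (div_nonneg (by nlinarith : (0:ℝ) ≤ m * C) hD.le) hx]
        calc ‖gammaPDFReal (m / 2 + 1) (1/2) x * ((m * C - x) / (x + D))‖
            = gammaPDFReal (m / 2 + 1) (1/2) x * |(m * C - x) / (x + D)| := by
              rw [norm_mul, Real.norm_eq_abs, Real.norm_eq_abs, abs_of_nonneg hpdf]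
          _ ≤ gammaPDFReal (m / 2 + 1) (1/2) x * (m * C / D + 1) := by
              exact mul_le_mul_of_nonneg_left hb hpdf
          _ ≤ ‖(m * C / D + 1) * gammaPDFReal (m / 2 + 1) (1/2) x‖ := by
              rw [Real.norm_eq_abs, abs_of_nonneg (by positivity)]; ring_nf; exact le_rfl
  -- pointwise comparison
  have hle : (fun x => gammaPDFReal (m / 2 + 1) (1/2) x * (α - β * x))
      ≤ fun x => gammaPDFReal (m / 2 + 1) (1/2) x * ((m * C - x) / (x + D)) := by
    intro x
    rcases lt_trichotomy x 0 with hx | rfl | hx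
    · simp [gpdf_of_neg' hx]
    · simp [gpdf_zero' (by linarith : (1:ℝ) < m / 2 + 1)]
    · refine mul_le_mul_of_nonneg_left ?_ (gammaPDFReal_nonneg ha1 hr x)
      have hxD : 0 < x + D := by linarith
      rw [le_div_iff₀ hxD, hα2]
      nlinarith [mul_nonneg hβnn (sq_nonneg (x - M)), hc]
  -- evaluate the lower integral
  have eval_lower : ∫ x, gammaPDFReal (m / 2 + 1) (1/2) x * (α - β * x) = α - β * M := by
    simp_rw [e]
    rw [integral_sub ((integrable_gpdf' ha1 hr).const_mul α)
        ((integrable_gpdf' ha2 hr).const_mul (β * M)),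
      integral_const_mul, integral_const_mul, integral_gpdf' ha1 hr, integral_gpdf' ha2 hr]
    ring
  have hval : α - β * M = ((C - 1) * m - 2) / ((m : ℝ) + 2 + D) := by
    rw [hα2, hβ, hK, hM]
    have h1 : ((m:ℝ) + 2 + D) ≠ 0 := by positivity
    field_simp
    ring
  have main : ((C - 1) * m - 2) / ((m : ℝ) + 2 + D)
      ≤ ∫ x, x * (C - x / m) / (x + D) ∂(gammaMeasure (m / 2 : ℝ) (1 / 2)) := by
    rw [step1, ← hval, ← eval_lower]
    exact integral_mono int_lower int_upper hle
  refine ⟨main, fun hC2 => ?_⟩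
  have h2 : 2 / (m : ℝ) < C - 1 := by linarith
  have h3 : (2:ℝ) < (C - 1) * m := by
    rw [div_lt_iff₀ hm0] at h2; linarith
  have h4 : 0 < ((C - 1) * m - 2) / ((m : ℝ) + 2 + D) :=
    div_pos (by linarith) (by linarith)
  exact lt_of_lt_of_le h4 main
end

section
/- In the location model, the quadratic-penalty estimator minimizing Σ_{i∈S}(Y_i−μ)² + Σ_{i∈B}(Y_i−μ−δ)² + λδ² has μ̂ = ωȲ_S + (1−ω)Ȳ_B with ω = (nN + nλ)/(nN + nλ + Nλ); as λ ranges over [0,∞], ω decreases from 1 to n/(n+N), and given any ω ∈ (n/(n+N), 1], the corresponding penalty is λ = nN(1−ω)/(Nω − n(1−ω)). -/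
open Filter BigOperators

lemma sum_sq_decomp {k : ℕ} (hk : 0 < k) (Y : Fin k → ℝ) (a : ℝ) :
    ∑ i, (Y i - a)^2
      = (∑ i, (Y i - (∑ j, Y j)/(k:ℝ))^2) + k * ((∑ j, Y j)/(k:ℝ) - a)^2 := by
  set m : ℝ := (∑ j, Y j)/(k:ℝ) with hm
  have hk' : (k:ℝ) ≠ 0 := Nat.cast_ne_zero.mpr hk.ne'
  have hsum : ∑ j, Y j = (k:ℝ) * m := by rw [hm]; field_simp
  have h1 : ∀ i, (Y i - a)^2 = (Y i - m)^2 + ((m-a)*(2*Y i) - (m-a)*(a+m)) :=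
    fun i => by ring
  calc ∑ i, (Y i - a)^2
      = ∑ i, ((Y i - m)^2 + ((m-a)*(2*Y i) - (m-a)*(a+m))) :=
        Finset.sum_congr rfl fun i _ => h1 i
    _ = (∑ i, (Y i - m)^2) + ((m-a)*(2*((k:ℝ)*m)) - (k:ℝ)*((m-a)*(a+m))) := by
        rw [Finset.sum_add_distrib, Finset.sum_sub_distrib, ← Finset.mul_sum,
          ← Finset.mul_sum, hsum, Finset.sum_const, Finset.card_univ,
          Fintype.card_fin, nsmul_eq_mul]
    _ = (∑ i, (Y i - m)^2) + k * (m - a)^2 := by ring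

/-- Location model with quadratic penalty `λδ²`: the minimizer has
`μ̂ = ω Ȳ_S + (1−ω) Ȳ_B` with `ω = (nN + nλ)/(nN + nλ + Nλ)`; as `λ` ranges
over `[0,∞]`, `ω` decreases strictly from `1` to `n/(n+N)`, and for any
`ω ∈ (n/(n+N), 1]` the corresponding penalty is
`λ = nN(1−ω)/(Nω − n(1−ω))`. -/
theorem stmt19 {n N : ℕ} (hn : 0 < n) (hN : 0 < N)
    (YS : Fin n → ℝ) (YB : Fin N → ℝ) :
    let mS := (∑ i, YS i) / (n : ℝ)
    let mB := (∑ i, YB i) / (N : ℝ)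
    let w : ℝ → ℝ := fun lam =>
      ((n : ℝ) * N + n * lam) / ((n : ℝ) * N + n * lam + N * lam)
    (∀ lam : ℝ, 0 ≤ lam → ∃ δh : ℝ, ∀ μ δ : ℝ,
        (∑ i, (YS i - (w lam * mS + (1 - w lam) * mB))^2)
          + (∑ i, (YB i - (w lam * mS + (1 - w lam) * mB) - δh)^2)
          + lam * δh^2
        ≤ (∑ i, (YS i - μ)^2) + (∑ i, (YB i - μ - δ)^2) + lam * δ^2)
    ∧ StrictAntiOn w (Set.Ici 0)
    ∧ w 0 = 1
    ∧ Tendsto w atTop (nhds ((n : ℝ) / (n + N)))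
    ∧ (∀ ω : ℝ, (n : ℝ) / (n + N) < ω → ω ≤ 1 →
        w ((n : ℝ) * N * (1 - ω) / ((N : ℝ) * ω - n * (1 - ω))) = ω) := by
  intro mS mB w
  have hnr : (0:ℝ) < n := Nat.cast_pos.mpr hn
  have hNr : (0:ℝ) < N := Nat.cast_pos.mpr hN
  refine ⟨?_, ?_, ?_, ?_, ?_⟩
  · -- minimization
    intro lam hlam
    have hD : (0:ℝ) < (n:ℝ) * N + n * lam + N * lam := by positivity
    have hNl : (0:ℝ) < (N:ℝ) + lam := by positivity
    set μh : ℝ := w lam * mS + (1 - w lam) * mB with hμh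
    refine ⟨(N:ℝ) * (mB - μh) / ((N:ℝ) + lam), ?_⟩
    set δh : ℝ := (N:ℝ) * (mB - μh) / ((N:ℝ) + lam) with hδh
    intro μ δ
    have hwv : w lam = ((n : ℝ) * N + n * lam) / ((n : ℝ) * N + n * lam + N * lam) := rfl
    -- stationarity equations
    have E2 : (N:ℝ) * (mB - μh - δh) = lam * δh := by
      rw [hδh]; field_simp; ring
    have E1 : (n:ℝ) * (mS - μh) + (N:ℝ) * (mB - μh - δh) = 0 := by
      rw [hδh, hμh, hwv]; field_simp; ring
    have hrw : ∀ (a b : ℝ), (∑ i, (YB i - a - b)^2) = ∑ i, (YB i - (a+b))^2 :=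
      fun a b => Finset.sum_congr rfl fun i _ => by ring
    rw [hrw μ δ, hrw μh δh, sum_sq_decomp hn YS μ, sum_sq_decomp hn YS μh,
      sum_sq_decomp hN YB (μ + δ), sum_sq_decomp hN YB (μh + δh)]
    show (∑ i, (YS i - mS)^2) + (n:ℝ) * (mS - μh)^2
        + ((∑ i, (YB i - mB)^2) + (N:ℝ) * (mB - (μh + δh))^2) + lam * δh^2
      ≤ (∑ i, (YS i - mS)^2) + (n:ℝ) * (mS - μ)^2
        + ((∑ i, (YB i - mB)^2) + (N:ℝ) * (mB - (μ + δ))^2) + lam * δ^2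
    have F1 : (μ - μh) * ((n:ℝ) * (mS - μh) + (N:ℝ) * (mB - μh - δh)) = 0 :=
      mul_eq_zero_of_right _ E1
    have F2 : (δ - δh) * ((N:ℝ) * (mB - μh - δh) - lam * δh) = 0 :=
      mul_eq_zero_of_right _ (by linarith [E2])
    nlinarith [F1, F2, mul_nonneg hnr.le (sq_nonneg (μ - μh)),
      mul_nonneg hNr.le (sq_nonneg (μ + δ - μh - δh)),
      mul_nonneg hlam (sq_nonneg (δ - δh))]
  · -- strict antitone
    intro a ha b hb hab
    have ha0 : (0:ℝ) ≤ a := ha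
    have hb0 : (0:ℝ) ≤ b := hb
    have hda : (0:ℝ) < (n:ℝ) * N + n * a + N * a := by positivity
    have hdb : (0:ℝ) < (n:ℝ) * N + n * b + N * b := by positivity
    show ((n : ℝ) * N + n * b) / ((n : ℝ) * N + n * b + N * b)
        < ((n : ℝ) * N + n * a) / ((n : ℝ) * N + n * a + N * a)
    rw [div_lt_div_iff₀ hdb hda]
    nlinarith [mul_pos (mul_pos hnr (mul_pos hNr hNr)) (sub_pos.mpr hab)]
  · -- w 0 = 1
    show ((n : ℝ) * N + n * 0) / ((n : ℝ) * N + n * 0 + N * 0) = 1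
    field_simp
    ring
  · -- limit
    have hne : (n:ℝ) + N ≠ 0 := by positivity
    have h0 : Tendsto (fun lam : ℝ => (n:ℝ) * N / lam) atTop (nhds 0) :=
      tendsto_const_nhds.div_atTop tendsto_id
    have hnum : Tendsto (fun lam : ℝ => (n:ℝ) * N / lam + n) atTop (nhds ((n:ℝ))) := by
      simpa using h0.add (tendsto_const_nhds (x := (n:ℝ)))
    have hden : Tendsto (fun lam : ℝ => (n:ℝ) * N / lam + n + N) atTop
        (nhds ((n:ℝ) + N)) := by
      simpa using (h0.add (tendsto_const_nhds (x := (n:ℝ)))).add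
        (tendsto_const_nhds (x := (N:ℝ)))
    have hlim : Tendsto (fun lam : ℝ => ((n:ℝ) * N / lam + n) / ((n:ℝ) * N / lam + n + N))
        atTop (nhds ((n:ℝ) / (n + N))) := hnum.div hden hne
    refine hlim.congr' ?_
    filter_upwards [eventually_gt_atTop (0:ℝ)] with lam hl
    show ((n:ℝ) * N / lam + n) / ((n:ℝ) * N / lam + n + N)
        = ((n : ℝ) * N + n * lam) / ((n : ℝ) * N + n * lam + N * lam)
    rw [div_eq_div_iff]
    · field_simp
    · have : (0:ℝ) < (n:ℝ) * N / lam + n + N := by positivity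
      exact this.ne'
    · positivity
  · -- inverse formula
    intro ω hω1 hω2
    have hDpos : (0:ℝ) < (N:ℝ) * ω - n * (1 - ω) := by
      have h := (div_lt_iff₀ (by positivity : (0:ℝ) < (n:ℝ) + N)).mp hω1
      nlinarith
    have key : ∀ l : ℝ, 0 ≤ l → ((N:ℝ) * ω - n * (1 - ω)) * l = (n:ℝ) * N * (1 - ω) →
        ((n : ℝ) * N + n * l) / ((n : ℝ) * N + n * l + N * l) = ω := by
      intro l hl0 hleq
      rw [div_eq_iff (by positivity : ((n:ℝ) * N + n * l + N * l) ≠ 0)]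
      linear_combination -hleq
    exact key _ (div_nonneg (mul_nonneg (by positivity) (by linarith)) hDpos.le)
      (by field_simp)
end
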